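/- arXiv:1104.1097 — 6 statements merged into one kernel-verified Lean document; each statement's English description precedes it below -/
import Mathlib

section
/- Let n > 1 and let D = {d_1, ..., d_k} be a set of proper divisors of n with gcd(d_1, ..., d_k) = 1 (so that ICG_n(D) is connected). If a and b are vertices of ICG_n(D) with gcd(a, n) = gcd(b, n), then the graph distance from vertex 0 to a equals the graph distance from vertex 0 to b. Consequently, for every p ≥ 1 the set N_p(0) of vertices at distance p from 0 is a union of sets G_n(d) = {k : 1 ≤ k < n, gcd(k, n) = d} over some set of divisors d of n. -/
open scoped Classical

/-- The integral circulant graph `ICG_n(D)`: vertices `0,…,n-1` (as `ZMod n`), with `a ~ b` iff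
`gcd(a-b, n) ∈ D`. -/
def ICG (n : ℕ) (D : Finset ℕ) : SimpleGraph (ZMod n) where
  Adj a b := a ≠ b ∧ Int.gcd ((a.val : ℤ) - (b.val : ℤ)) n ∈ D
  symm := by
    constructor
    rintro a b ⟨hne, h⟩
    refine ⟨hne.symm, ?_⟩
    rwa [show ((b.val : ℤ) - a.val) = -((a.val : ℤ) - b.val) by ring, Int.neg_gcd]
  loopless := by constructor; rintro a ⟨h, -⟩; exact h rfl


-- int gcd congruence
lemma int_gcd_congr {a b : ℤ} (n : ℕ) (h : (n:ℤ) ∣ a - b) : Int.gcd a n = Int.gcd b n := by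
  apply Nat.dvd_antisymm
  · refine Int.natCast_dvd_natCast.mp (Int.dvd_coe_gcd ?_ (Int.gcd_dvd_right _ _))
    have h1 : (Int.gcd a n : ℤ) ∣ a := Int.gcd_dvd_left _ _
    have h2 : (Int.gcd a n : ℤ) ∣ a - b := dvd_trans (Int.gcd_dvd_right _ _) h
    simpa using h1.sub h2
  · refine Int.natCast_dvd_natCast.mp (Int.dvd_coe_gcd ?_ (Int.gcd_dvd_right _ _))
    have h1 : (Int.gcd b n : ℤ) ∣ b := Int.gcd_dvd_left _ _
    have h2 : (Int.gcd b n : ℤ) ∣ a - b := dvd_trans (Int.gcd_dvd_right _ _) h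
    simpa using h2.add h1

lemma icg_gcd_eq (n : ℕ) [NeZero n] (x y : ZMod n) :
    Int.gcd ((x.val : ℤ) - (y.val : ℤ)) n = Nat.gcd (x - y).val n := by
  rw [show (Nat.gcd (x-y).val n) = Int.gcd ((x-y).val : ℤ) n from (Int.gcd_natCast_natCast _ _).symm]
  apply int_gcd_congr
  rw [← ZMod.intCast_zmod_eq_zero_iff_dvd]
  push_cast
  simp [ZMod.natCast_val, ZMod.intCast_cast, ZMod.intCast_zmod_cast]


lemma gcd_unit_mul (n : ℕ) [NeZero n] (u : (ZMod n)ˣ) (z : ZMod n) :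
    Nat.gcd (((u : ZMod n) * z).val) n = Nat.gcd z.val n := by
  rw [ZMod.val_mul]
  have h1 : Nat.gcd (((u : ZMod n).val * z.val) % n) n
      = Nat.gcd ((u : ZMod n).val * z.val) n := by
    conv_rhs => rw [Nat.gcd_comm, Nat.gcd_rec]
  rw [h1, Nat.Coprime.gcd_mul_left_cancel _ (ZMod.val_coe_unit_coprime u)]

/-- Multiplication by a unit is an automorphism of `ICG n D`. -/
def icgMulIso (n : ℕ) [NeZero n] (D : Finset ℕ) (u : (ZMod n)ˣ) :
    ICG n D ≃g ICG n D where
  toEquiv := { toFun := fun x => (u : ZMod n) * x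
               invFun := fun x => ((u⁻¹ : (ZMod n)ˣ) : ZMod n) * x
               left_inv := fun x => by simp [← mul_assoc, ← Units.val_mul]
               right_inv := fun x => by simp [← mul_assoc, ← Units.val_mul] }
  map_rel_iff' := by
    intro a b
    show (ICG n D).Adj _ _ ↔ (ICG n D).Adj a b
    unfold ICG
    simp only [Equiv.coe_fn_mk, ne_eq, Units.mul_right_inj]
    rw [icg_gcd_eq, icg_gcd_eq, ← mul_sub, gcd_unit_mul]

lemma iso_dist_le {V W : Type*} {G : SimpleGraph V} {H : SimpleGraph W} (f : G ≃g H)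
    (a b : V) : H.dist (f a) (f b) ≤ G.dist a b := by
  by_cases h : G.Reachable a b
  · obtain ⟨w, hw⟩ := h.exists_walk_length_eq_dist
    calc H.dist (f a) (f b) ≤ (w.map f.toHom).length := SimpleGraph.dist_le _
      _ = G.dist a b := by rw [SimpleGraph.Walk.length_map, hw]
  · rw [SimpleGraph.dist_eq_zero_of_not_reachable h]
    rw [SimpleGraph.dist_eq_zero_of_not_reachable]
    intro hr
    exact h ⟨(hr.some.map f.symm.toHom).copy (f.symm_apply_apply a) (f.symm_apply_apply b)⟩

lemma iso_dist {V W : Type*} {G : SimpleGraph V} {H : SimpleGraph W} (f : G ≃g H)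
    (a b : V) : H.dist (f a) (f b) = G.dist a b := by
  refine le_antisymm (iso_dist_le f a b) ?_
  have := iso_dist_le f.symm (f a) (f b)
  simpa using this


lemma exists_unit_mul (n : ℕ) [NeZero n] (a b : ZMod n)
    (h : Nat.gcd a.val n = Nat.gcd b.val n) : ∃ u : (ZMod n)ˣ, (u : ZMod n) * a = b := by
  set g := Nat.gcd a.val n with hg
  have hn0 : 0 < n := Nat.pos_of_ne_zero (NeZero.ne n)
  have hgpos : 0 < g := Nat.gcd_pos_of_pos_right _ hn0
  have hgn : g ∣ n := Nat.gcd_dvd_right _ _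
  set m := n / g with hm
  have hnm : n = g * m := (Nat.mul_div_cancel' hgn).symm
  have hm0 : 0 < m := by
    rcases Nat.eq_zero_or_pos m with h0 | h0
    · rw [h0, mul_zero] at hnm; omega
    · exact h0
  haveI : NeZero m := ⟨hm0.ne'⟩
  have hmn : m ∣ n := ⟨g, by rw [hnm, mul_comm]⟩
  set a₁ := a.val / g with ha₁
  set b₁ := b.val / g with hb₁
  have hag : g ∣ a.val := Nat.gcd_dvd_left _ _
  have hbg : g ∣ b.val := h ▸ Nat.gcd_dvd_left _ _
  have ha : a.val = g * a₁ := (Nat.mul_div_cancel' hag).symm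
  have hb : b.val = g * b₁ := (Nat.mul_div_cancel' hbg).symm
  have hca : Nat.Coprime a₁ m := by
    have : g * Nat.gcd a₁ m = g * 1 := by
      rw [← Nat.gcd_mul_left, ← ha, ← hnm, ← hg, mul_one]
    exact Nat.eq_of_mul_eq_mul_left hgpos this
  have hcb : Nat.Coprime b₁ m := by
    have : g * Nat.gcd b₁ m = g * 1 := by
      rw [← Nat.gcd_mul_left, ← hb, ← hnm, h, mul_one]
    exact Nat.eq_of_mul_eq_mul_left hgpos this
  set ua := ZMod.unitOfCoprime a₁ hca
  set ub := ZMod.unitOfCoprime b₁ hcb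
  obtain ⟨u, hu⟩ := ZMod.unitsMap_surjective hmn (ub * ua⁻¹)
  refine ⟨u, ?_⟩
  have key : (u : ZMod n).val * a₁ ≡ b₁ [MOD m] := by
    rw [← ZMod.natCast_eq_natCast_iff]
    push_cast
    have h1 : (((u : ZMod n).val : ZMod m)) = ((ub * ua⁻¹ : (ZMod m)ˣ) : ZMod m) := by
      rw [← hu]
      rw [ZMod.unitsMap_def]
      rw [Units.coe_map]
      simp [ZMod.natCast_val]
    rw [h1, show ((a₁ : ℕ) : ZMod m) = ((ua : (ZMod m)ˣ) : ZMod m) from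
      (ZMod.coe_unitOfCoprime a₁ hca).symm, ← Units.val_mul, inv_mul_cancel_right,
      ZMod.coe_unitOfCoprime]
  have key2 : (u : ZMod n).val * a.val ≡ b.val [MOD n] := by
    have h2 := key.mul_left' g
    rw [mul_left_comm, ← ha, ← hb, ← hnm] at h2
    exact h2
  calc (u : ZMod n) * a = (((u : ZMod n).val * a.val : ℕ) : ZMod n) := by
        push_cast; simp [ZMod.natCast_val, ZMod.cast_id]
    _ = ((b.val : ℕ) : ZMod n) := (ZMod.natCast_eq_natCast_iff _ _ _).mpr key2
    _ = b := by simp [ZMod.natCast_val, ZMod.cast_id]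

/-- The distance matrix of a graph. -/
noncomputable def distMatrix {V : Type} [Fintype V] (G : SimpleGraph V) : Matrix V V ℝ :=
  Matrix.of fun i j => (G.dist i j : ℝ)

/-- The distance energy: the sum of the absolute values of the eigenvalues (with multiplicity)
of the distance matrix, i.e. of the roots of its characteristic polynomial. -/
noncomputable def distEnergy {V : Type} [Fintype V] [DecidableEq V] (G : SimpleGraph V) : ℝ :=
  ((distMatrix G).charpoly.roots.map fun x => |x|).sum

/-- in a connected integral circulant graph `ICG_n(D)`, vertices with the same
gcd with `n` are at the same distance from `0`; consequently each distance layer `N_p(0)` is a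
union of the sets `G_n(d) = {k : 1 ≤ k < n, gcd(k,n) = d}` over some set of divisors of `n`. -/
theorem distance_layers_of_ICG (n : ℕ) [NeZero n] (hn : 1 < n) (D : Finset ℕ)
    (hD : D.Nonempty) (hdvd : ∀ d ∈ D, d ∣ n ∧ 0 < d ∧ d < n) (hgcd : D.gcd id = 1) :
    (∀ a b : ZMod n, Nat.gcd a.val n = Nat.gcd b.val n →
      (ICG n D).dist 0 a = (ICG n D).dist 0 b) ∧
    (∀ p : ℕ, 1 ≤ p → ∃ S : Set ℕ, (∀ d ∈ S, d ∣ n) ∧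
      {v : ZMod n | (ICG n D).dist 0 v = p} =
        ⋃ d ∈ S, {v : ZMod n | v ≠ 0 ∧ Nat.gcd v.val n = d}) := by
  have part1 : ∀ a b : ZMod n, Nat.gcd a.val n = Nat.gcd b.val n →
      (ICG n D).dist 0 a = (ICG n D).dist 0 b := by
    intro a b hab
    obtain ⟨u, hu⟩ := exists_unit_mul n a b hab
    have h2 := iso_dist (icgMulIso n D u) 0 a
    rw [show (icgMulIso n D u) 0 = 0 from mul_zero _,
      show (icgMulIso n D u) a = b from hu] at h2
    exact h2.symm
  refine ⟨part1, fun p hp => ?_⟩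
  refine ⟨{d | ∃ v : ZMod n, (ICG n D).dist 0 v = p ∧ v ≠ 0 ∧ Nat.gcd v.val n = d}, ?_, ?_⟩
  · rintro d ⟨v, -, -, rfl⟩; exact Nat.gcd_dvd_right _ _
  · ext v
    simp only [Set.mem_setOf_eq, Set.mem_iUnion]
    constructor
    · intro hv
      have hv0 : v ≠ 0 := by
        rintro rfl
        rw [SimpleGraph.dist_self] at hv; omega
      exact ⟨Nat.gcd v.val n, ⟨v, hv, hv0, rfl⟩, hv0, rfl⟩
    · rintro ⟨d, ⟨w, hw, hw0, hwd⟩, hv0, hvd⟩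
      rw [part1 v w (hvd.trans hwd.symm)]
      exact hw
end

section
/- Let n = 2^k with k > 1. Then the unitary Cayley graph X_n is the complete bipartite graph with parts the even and the odd residues, its distance matrix has spectrum {3n/2 − 2, n/2 − 2, −2, −2, ..., −2} (with −2 of multiplicity n − 2), and its distance energy is DE(X_n) = 4(n − 2). -/
open scoped Classical

section Aux
open Polynomial Matrix

lemma icg_adj_iff (k : ℕ) (hk : 0 < k) (n : ℕ) [NeZero n] (hn : n = 2 ^ k) (a b : ZMod n) :
    (ICG n {1}).Adj a b ↔ a.val % 2 ≠ b.val % 2 := by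
  have hval : a = b ↔ a.val = b.val := ⟨fun h => by rw [h], fun h => ZMod.val_injective n h⟩
  have hgcd : Int.gcd ((a.val : ℤ) - (b.val : ℤ)) n
      = Nat.gcd ((a.val : ℤ) - (b.val : ℤ)).natAbs n := by
    simp [Int.gcd]
  constructor
  · rintro ⟨hne, h⟩
    simp only [Finset.mem_singleton, hgcd, hn] at h
    have h2 : Nat.Coprime ((a.val : ℤ) - (b.val : ℤ)).natAbs 2 :=
      (Nat.coprime_pow_right_iff hk _ _).mp h
    have := (Nat.Prime.coprime_iff_not_dvd Nat.prime_two).mp h2.symm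
    omega
  · intro h
    have hne : a ≠ b := fun he => h (by rw [hval.mp he])
    refine ⟨hne, ?_⟩
    simp only [Finset.mem_singleton, hgcd, hn]
    refine (Nat.coprime_pow_right_iff hk _ _).mpr ?_
    have : ¬ (2 ∣ ((a.val : ℤ) - (b.val : ℤ)).natAbs) := by omega
    exact ((Nat.Prime.coprime_iff_not_dvd Nat.prime_two).mpr this).symm

lemma parity_flip (n : ℕ) [NeZero n] (hn2 : 2 ∣ n) (hn1 : 1 < n) (a : ZMod n) :
    (a + 1).val % 2 ≠ a.val % 2 := by
  have h1 : (1 : ZMod n).val = 1 := ZMod.val_one_eq_one_mod n ▸ Nat.mod_eq_of_lt hn1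
  have hadd : (a + 1).val = (a.val + 1) % n := by rw [ZMod.val_add, h1]
  have := Nat.mod_mod_of_dvd (a.val + 1) hn2
  rw [hadd]
  omega

lemma icg_dist (k : ℕ) (hk : 1 < k) (n : ℕ) [NeZero n] (hn : n = 2 ^ k) (a b : ZMod n) :
    (ICG n {1}).dist a b = if a = b then 0 else if a.val % 2 = b.val % 2 then 2 else 1 := by
  have hk0 : 0 < k := by omega
  have hn4 : 4 ≤ n := by
    rw [hn]; calc (4:ℕ) = 2^2 := rfl
    _ ≤ 2^k := Nat.pow_le_pow_right (by norm_num) hk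
  have hn2 : 2 ∣ n := by rw [hn]; exact dvd_pow_self 2 (by omega)
  by_cases hab : a = b
  · simp [hab]
  rw [if_neg hab]
  by_cases hpar : a.val % 2 = b.val % 2
  · rw [if_pos hpar]
    have hflipa := parity_flip n hn2 (by omega) a
    have hac : (ICG n {1}).Adj a (a + 1) := by
      rw [icg_adj_iff k hk0 n hn]; omega
    have hcb : (ICG n {1}).Adj (a + 1) b := by
      rw [icg_adj_iff k hk0 n hn]; omega
    have w : (ICG n {1}).Walk a b := SimpleGraph.Walk.cons hac (SimpleGraph.Walk.cons hcb SimpleGraph.Walk.nil)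
    have hle : (ICG n {1}).dist a b ≤ 2 := by
      have h := SimpleGraph.dist_le (SimpleGraph.Walk.cons hac (SimpleGraph.Walk.cons hcb SimpleGraph.Walk.nil))
      simp only [SimpleGraph.Walk.length_cons, SimpleGraph.Walk.length_nil] at h
      exact h
    have hne0 : (ICG n {1}).dist a b ≠ 0 := by
      have := SimpleGraph.Reachable.pos_dist_of_ne ⟨w⟩ hab
      omega
    have hne1 : (ICG n {1}).dist a b ≠ 1 := by
      intro h
      have := (SimpleGraph.dist_eq_one_iff_adj).mp h
      rw [icg_adj_iff k hk0 n hn] at this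
      exact this hpar
    omega
  · rw [if_neg hpar]
    exact SimpleGraph.dist_eq_one_iff_adj.mpr ((icg_adj_iff k hk0 n hn a b).mpr hpar)

noncomputable def vv (n : ℕ) : ZMod n → ℝ := fun i => if i.val % 2 = 0 then 1 else -1

noncomputable def Umat (n : ℕ) : Matrix (ZMod n) (Fin 2) ℝ :=
  Matrix.of fun i t => if t = 0 then 1 else vv n i

noncomputable def Wmat (n : ℕ) : Matrix (Fin 2) (ZMod n) ℝ :=
  Matrix.of fun t j => if t = 0 then 3/2 else vv n j / 2

lemma sum_alt (m : ℕ) :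
    ∑ i ∈ Finset.range (2*m), (if i % 2 = 0 then (1:ℝ) else -1) = 0 := by
  induction m with
  | zero => simp
  | succ m ih =>
    rw [show 2*(m+1) = (2*m)+1+1 by ring, Finset.sum_range_succ, Finset.sum_range_succ, ih]
    have h1 : (2*m) % 2 = 0 := by omega
    have h2 : (2*m+1) % 2 = 1 := by omega
    simp [h1, h2]

lemma zmod_sum_eq (n : ℕ) [NeZero n] (f : ℕ → ℝ) :
    ∑ j : ZMod n, f j.val = ∑ i ∈ Finset.range n, f i := by
  have hbij : Function.Bijective (fun a : ZMod n => (⟨a.val, ZMod.val_lt a⟩ : Fin n)) := by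
    rw [Fintype.bijective_iff_injective_and_card]
    exact ⟨fun a b h => ZMod.val_injective n (by simpa using congrArg Fin.val h), by simp [ZMod.card]⟩
  rw [← Fin.sum_univ_eq_sum_range]
  exact Fintype.sum_bijective _ hbij _ _ (fun x => rfl)

lemma sum_vv (n : ℕ) [NeZero n] (hn2 : 2 ∣ n) : ∑ j : ZMod n, vv n j = 0 := by
  obtain ⟨m, rfl⟩ := hn2
  simpa [vv] using zmod_sum_eq (2*m) (fun i => if i % 2 = 0 then (1:ℝ) else -1) ▸ sum_alt m

lemma sum_vv_sq (n : ℕ) [NeZero n] : ∑ j : ZMod n, vv n j * vv n j = n := by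
  have : ∀ j : ZMod n, vv n j * vv n j = 1 := by
    intro j; unfold vv; split <;> norm_num
  simp [this, Finset.card_univ, ZMod.card]


lemma vv_mul (n : ℕ) (i j : ZMod n) :
    vv n i * vv n j = if i.val % 2 = j.val % 2 then 1 else -1 := by
  unfold vv
  rcases Nat.mod_two_eq_zero_or_one i.val with h1 | h1 <;>
    rcases Nat.mod_two_eq_zero_or_one j.val with h2 | h2 <;> simp [h1, h2]

lemma distMatrix_eq (k : ℕ) (hk : 1 < k) (n : ℕ) [NeZero n] (hn : n = 2 ^ k) :
    distMatrix (ICG n {1}) = Umat n * Wmat n - (2:ℝ) • (1 : Matrix (ZMod n) (ZMod n) ℝ) := by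
  ext i j
  have hmul : (Umat n * Wmat n) i j = 3/2 + vv n i * vv n j / 2 := by
    rw [Matrix.mul_apply, Fin.sum_univ_two]
    simp [Umat, Wmat, mul_div_assoc]
  rw [Matrix.sub_apply, hmul, distMatrix, Matrix.of_apply, icg_dist k hk n hn,
    Matrix.smul_apply, Matrix.one_apply, vv_mul]
  by_cases hij : i = j
  · simp [hij]; norm_num
  · rw [if_neg hij, if_neg hij]
    by_cases hpar : i.val % 2 = j.val % 2 <;> simp [hpar] <;> norm_num

lemma WU_eq (n : ℕ) [NeZero n] (hn2 : 2 ∣ n) :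
    Wmat n * Umat n = Matrix.of (fun s t : Fin 2 =>
      if s = 0 ∧ t = 0 then 3*(n:ℝ)/2 else if s = 1 ∧ t = 1 then (n:ℝ)/2 else 0) := by
  ext s t
  rw [Matrix.mul_apply]
  have h0 := sum_vv n hn2
  have h1 := sum_vv_sq n
  fin_cases s <;> fin_cases t <;>
    simp only [Wmat, Umat, Matrix.of_apply] <;> simp
  · ring
  · rw [← Finset.mul_sum, h0, mul_zero]
  · calc ∑ x : ZMod n, vv n x / 2 = (∑ x : ZMod n, vv n x) / 2 := by rw [Finset.sum_div]
      _ = 0 := by rw [h0]; norm_num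
  · have h2 : ∑ x : ZMod n, vv n x / 2 * vv n x = (∑ x : ZMod n, vv n x * vv n x) / 2 := by
      rw [Finset.sum_div]
      exact Finset.sum_congr rfl fun x _ => by ring
    rw [h2, h1]

lemma charpoly_eval {N : Type} [Fintype N] [DecidableEq N] (M : Matrix N N ℝ) (x : ℝ) :
    M.charpoly.eval x = (Matrix.scalar N x - M).det := by
  rw [Matrix.charpoly, _root_.eval_det, matPolyEquiv_charmatrix]
  simp

lemma charpoly_eq (k : ℕ) (hk : 1 < k) (n : ℕ) [NeZero n] (hn : n = 2 ^ k) :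
    (distMatrix (ICG n {1})).charpoly =
      (Polynomial.X - Polynomial.C (3 * (n : ℝ) / 2 - 2)) *
        (Polynomial.X - Polynomial.C ((n : ℝ) / 2 - 2)) *
        (Polynomial.X + Polynomial.C 2) ^ (n - 2) := by
  have hn4 : 4 ≤ n := by
    rw [hn]
    calc (4:ℕ) = 2^2 := rfl
    _ ≤ 2^k := Nat.pow_le_pow_right (by norm_num) hk
  have hn2 : 2 ∣ n := by rw [hn]; exact dvd_pow_self 2 (by omega)
  apply Polynomial.eq_of_infinite_eval_eq
  apply Set.Infinite.mono (s := ({-2} : Set ℝ)ᶜ)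
  swap
  · exact Set.Finite.infinite_compl (Set.finite_singleton (-2))
  intro x hx
  simp only [Set.mem_compl_iff, Set.mem_singleton_iff] at hx
  have hc : x + 2 ≠ 0 := fun h => hx (by linarith)
  set c := x + 2 with hcdef
  simp only [Set.mem_setOf_eq]
  rw [charpoly_eval, distMatrix_eq k hk n hn]
  have key : Matrix.scalar (ZMod n) x - (Umat n * Wmat n - (2:ℝ) • 1)
      = c • (1 : Matrix (ZMod n) (ZMod n) ℝ) - Umat n * Wmat n := by
    ext i j
    simp only [Matrix.sub_apply, Matrix.scalar_apply, Matrix.diagonal_apply,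
      Matrix.smul_apply, Matrix.one_apply, smul_eq_mul]
    split <;> ring
  rw [key]
  have factor : c • (1 : Matrix (ZMod n) (ZMod n) ℝ) - Umat n * Wmat n
      = c • (1 + ((-(c⁻¹)) • Umat n) * Wmat n) := by
    rw [smul_add, Matrix.smul_mul, smul_smul]
    rw [show c * -(c⁻¹) = -1 by field_simp]
    simp [sub_eq_add_neg]
  rw [factor, Matrix.det_smul, Matrix.det_one_add_mul_comm, Matrix.mul_smul,
    WU_eq n hn2, ZMod.card]
  have hdet2 : ((1 : Matrix (Fin 2) (Fin 2) ℝ) + (-(c⁻¹)) • Matrix.of (fun s t : Fin 2 =>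
      if s = 0 ∧ t = 0 then 3*(n:ℝ)/2 else if s = 1 ∧ t = 1 then (n:ℝ)/2 else 0)).det
      = (1 - c⁻¹ * (3*(n:ℝ)/2)) * (1 - c⁻¹ * ((n:ℝ)/2)) := by
    rw [Matrix.det_fin_two]
    simp [Matrix.one_apply]
    ring
  rw [hdet2]
  have hpow : c ^ n = c ^ (n - 2) * c ^ 2 := by
    rw [← pow_add]; congr 1; omega
  rw [hpow]
  simp only [Polynomial.eval_mul, Polynomial.eval_pow, Polynomial.eval_sub,
    Polynomial.eval_add, Polynomial.eval_X, Polynomial.eval_C]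
  rw [hcdef]
  have hc' : x + 2 ≠ 0 := hc
  field_simp
  ring

lemma energy_calc (n : ℕ) (hn4 : 4 ≤ n) :
    (((Polynomial.X - Polynomial.C (3 * (n : ℝ) / 2 - 2)) *
        (Polynomial.X - Polynomial.C ((n : ℝ) / 2 - 2)) *
        (Polynomial.X + Polynomial.C 2) ^ (n - 2)).roots.map fun x => |x|).sum
      = 4 * ((n : ℝ) - 2) := by
  have hx2 : (Polynomial.X + Polynomial.C (2:ℝ)) = X - C (-2) := by
    rw [map_neg, sub_neg_eq_add]
  have h1 : (X - C (3 * (n : ℝ) / 2 - 2)) ≠ 0 := X_sub_C_ne_zero _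
  have h2 : (X - C ((n : ℝ) / 2 - 2)) ≠ 0 := X_sub_C_ne_zero _
  have h3 : (Polynomial.X + Polynomial.C (2:ℝ)) ^ (n-2) ≠ 0 := by
    rw [hx2]; exact pow_ne_zero _ (X_sub_C_ne_zero _)
  rw [Polynomial.roots_mul (mul_ne_zero (mul_ne_zero h1 h2) h3),
    Polynomial.roots_mul (mul_ne_zero h1 h2), hx2, Polynomial.roots_pow,
    Polynomial.roots_X_sub_C, Polynomial.roots_X_sub_C, Polynomial.roots_X_sub_C]
  rw [Multiset.nsmul_singleton]
  simp only [Multiset.map_add, Multiset.map_singleton, Multiset.map_replicate,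
    Multiset.sum_add, Multiset.sum_singleton, Multiset.sum_replicate]
  have hA : |3 * (n : ℝ) / 2 - 2| = 3 * (n : ℝ) / 2 - 2 := by
    rw [abs_of_nonneg]
    have : (4:ℝ) ≤ n := by exact_mod_cast hn4
    linarith
  have hB : |(n : ℝ) / 2 - 2| = (n : ℝ) / 2 - 2 := by
    rw [abs_of_nonneg]
    have : (4:ℝ) ≤ n := by exact_mod_cast hn4
    linarith
  have habs : |(-2:ℝ)| = 2 := by norm_num
  rw [hA, hB, habs, nsmul_eq_mul, Nat.cast_sub (by omega : 2 ≤ n)]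
  have : (4:ℝ) ≤ n := by exact_mod_cast hn4
  ring

end Aux

/-- for `n = 2^k`, `k > 1`, the unitary Cayley graph `X_n` is the complete
bipartite graph on the even and odd residues, its distance matrix has spectrum
`{3n/2 - 2, n/2 - 2, -2, …, -2}` (with `-2` of multiplicity `n-2`), and its distance energy
is `4(n-2)`. -/
theorem unitaryCayley_two_power (k : ℕ) (hk : 1 < k) (n : ℕ) [NeZero n] (hn : n = 2 ^ k) :
    (∀ a b : ZMod n, (ICG n {1}).Adj a b ↔ a.val % 2 ≠ b.val % 2) ∧
    (distMatrix (ICG n {1})).charpoly =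
      (Polynomial.X - Polynomial.C (3 * (n : ℝ) / 2 - 2)) *
        (Polynomial.X - Polynomial.C ((n : ℝ) / 2 - 2)) *
        (Polynomial.X + Polynomial.C 2) ^ (n - 2) ∧
    distEnergy (ICG n {1}) = 4 * ((n : ℝ) - 2) := by
  have hk0 : 0 < k := by omega
  have hn4 : 4 ≤ n := by
    rw [hn]
    calc (4:ℕ) = 2^2 := rfl
    _ ≤ 2^k := Nat.pow_le_pow_right (by norm_num) hk
  refine ⟨fun a b => icg_adj_iff k hk0 n hn a b, charpoly_eq k hk n hn, ?_⟩
  rw [distEnergy, charpoly_eq k hk n hn]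
  exact energy_calc n hn4
end

section
/- Let n be an odd composite number. Then the unitary Cayley graph X_n has diameter 2, and its distance matrix satisfies D = 2(J − I) − A, where J is the all-ones n×n matrix, I is the identity matrix, and A is the adjacency matrix of X_n. -/
open scoped Classical

lemma isUnit_intCast_iff (n : ℕ) (z : ℤ) :
    IsUnit ((z : ℤ) : ZMod n) ↔ Int.gcd z n = 1 := by
  have hg : Int.gcd z n = Nat.gcd z.natAbs n := by
    simp [Int.gcd, Int.natAbs_natCast]
  rw [hg, ← Nat.coprime_iff_gcd_eq_one, ← ZMod.isUnit_iff_coprime]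
  rcases Int.natAbs_eq z with h | h
  · conv_lhs => rw [h, Int.cast_natCast]
  · conv_lhs => rw [h, Int.cast_neg, Int.cast_natCast]
    rw [IsUnit.neg_iff]

lemma isUnit_castHom_iff (p k : ℕ) (hp : p.Prime) (hk : k ≠ 0) (y : ZMod (p ^ k)) :
    IsUnit y ↔ (ZMod.castHom (dvd_pow_self p hk) (ZMod p) y) ≠ 0 := by
  haveI : Fact p.Prime := ⟨hp⟩
  haveI : NeZero (p ^ k) := ⟨pow_ne_zero _ hp.pos.ne'⟩
  have h1 : IsUnit y ↔ Nat.Coprime y.val (p ^ k) := by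
    conv_lhs => rw [← ZMod.natCast_zmod_val y]
    rw [ZMod.isUnit_iff_coprime]
  have h2 : Nat.Coprime y.val (p ^ k) ↔ ¬ p ∣ y.val := by
    rw [Nat.coprime_pow_right_iff (Nat.pos_of_ne_zero hk), Nat.coprime_comm,
      Nat.Prime.coprime_iff_not_dvd hp]
  have h3 : (ZMod.castHom (dvd_pow_self p hk) (ZMod p) y) = ((y.val : ℕ) : ZMod p) := by
    rw [ZMod.castHom_apply, ZMod.natCast_val]
  rw [h1, h2, h3, Ne, ZMod.natCast_eq_zero_iff]

lemma zmod_sum_two_units : ∀ n : ℕ, Odd n → ∀ x : ZMod n,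
    ∃ u v : ZMod n, IsUnit u ∧ IsUnit v ∧ u + v = x := by
  intro n
  induction n using Nat.recOnPosPrimePosCoprime with
  | prime_pow p k hpp hk =>
    intro hodd x
    have hp : p.Prime := hpp
    haveI : Fact p.Prime := ⟨hp⟩
    have hp2 : p ≠ 2 := by
      rintro rfl
      have : ¬ Odd (2 ^ k) := by
        simp [Nat.even_pow, hk.ne', Nat.not_odd_iff_even]
      exact this hodd
    set f := ZMod.castHom (dvd_pow_self p hk.ne') (ZMod p) with hf
    have h2ne : (2 : ZMod p) ≠ 0 := by
      have : ((2 : ℕ) : ZMod p) ≠ 0 := by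
        rw [Ne, ZMod.natCast_eq_zero_iff]
        intro hdvd
        exact hp2 ((Nat.prime_dvd_prime_iff_eq hp Nat.prime_two).mp hdvd)
      simpa using this
    have hf2 : f (2 : ZMod (p ^ k)) = 2 := by
      rw [show ((2 : ZMod (p ^ k)) = (1 : ZMod (p ^ k)) + 1) by norm_num, map_add, map_one]
      norm_num
    by_cases hx1 : f x = 1
    · refine ⟨2, x - 2, ?_, ?_, by ring⟩
      · rw [isUnit_castHom_iff p k hp hk.ne', hf2]
        exact h2ne
      · rw [isUnit_castHom_iff p k hp hk.ne', map_sub, hx1, hf2]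
        rw [show ((1 : ZMod p) - 2 = -1) by ring]
        exact neg_ne_zero.mpr one_ne_zero
    · refine ⟨1, x - 1, ?_, ?_, by ring⟩
      · rw [isUnit_castHom_iff p k hp hk.ne', map_one]
        exact one_ne_zero
      · rw [isUnit_castHom_iff p k hp hk.ne', map_sub, map_one]
        exact sub_ne_zero.mpr hx1
  | zero =>
    intro h
    simp [Nat.odd_iff] at h
  | one =>
    intro _ x
    exact ⟨x, 0, isUnit_of_subsingleton x, isUnit_of_subsingleton 0, by ring⟩
  | coprime a b ha hb hab iha ihb =>
    intro hodd x
    obtain ⟨hoa, hob⟩ := Nat.odd_mul.mp hodd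
    let e := ZMod.chineseRemainder hab
    obtain ⟨u1, v1, hu1, hv1, h1⟩ := iha hoa (e x).1
    obtain ⟨u2, v2, hu2, hv2, h2⟩ := ihb hob (e x).2
    have hu : IsUnit ((u1, u2) : ZMod a × ZMod b) := by
      obtain ⟨w1, rfl⟩ := hu1; obtain ⟨w2, rfl⟩ := hu2
      exact IsUnit.of_mul_eq_one (((w1⁻¹ : (ZMod a)ˣ) : ZMod a), ((w2⁻¹ : (ZMod b)ˣ) : ZMod b))
        (by rw [Prod.mk_mul_mk]; simp)
    have hv : IsUnit ((v1, v2) : ZMod a × ZMod b) := by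
      obtain ⟨w1, rfl⟩ := hv1; obtain ⟨w2, rfl⟩ := hv2
      exact IsUnit.of_mul_eq_one (((w1⁻¹ : (ZMod a)ˣ) : ZMod a), ((w2⁻¹ : (ZMod b)ˣ) : ZMod b))
        (by rw [Prod.mk_mul_mk]; simp)
    refine ⟨e.symm (u1, u2), e.symm (v1, v2), hu.map e.symm.toRingHom,
      hv.map e.symm.toRingHom, ?_⟩
    rw [← map_add, Prod.mk_add_mk, h1, h2]
    simp [e]

lemma ICG_adj_iff (n : ℕ) [NeZero n] (a b : ZMod n) :
    (ICG n {1}).Adj a b ↔ a ≠ b ∧ IsUnit (a - b) := by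
  have hcast : (((a.val : ℤ) - (b.val : ℤ) : ℤ) : ZMod n) = a - b := by
    push_cast
    rw [ZMod.natCast_zmod_val, ZMod.natCast_zmod_val]
  constructor
  · rintro ⟨hne, h⟩
    refine ⟨hne, ?_⟩
    rw [← hcast, isUnit_intCast_iff]
    simpa using h
  · rintro ⟨hne, h⟩
    refine ⟨hne, ?_⟩
    rw [← hcast, isUnit_intCast_iff] at h
    simpa using h

lemma ICG_walk_two (n : ℕ) [NeZero n] (hn : 1 < n) (hodd : Odd n) (a b : ZMod n) :
    ∃ w : (ICG n {1}).Walk a b, w.length = 2 := by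
  haveI : Fact (1 < n) := ⟨hn⟩
  obtain ⟨u, v, hu, hv, huv⟩ := zmod_sum_two_units n hodd (a - b)
  have h1 : (ICG n {1}).Adj a (a - u) := by
    rw [ICG_adj_iff]
    constructor
    · intro h
      exact hu.ne_zero (sub_eq_self.mp h.symm)
    · simpa using hu
  have h2 : (ICG n {1}).Adj (a - u) b := by
    rw [ICG_adj_iff]
    have hab : a - u - b = v := by
      have : a - b = u + v := huv.symm
      rw [sub_sub, add_comm u b, ← sub_sub, this]; ring
    constructor
    · intro h
      apply hv.ne_zero
      rw [← hab, h]; ring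
    · rw [hab]; exact hv
  exact ⟨SimpleGraph.Walk.cons h1 (SimpleGraph.Walk.cons h2 SimpleGraph.Walk.nil), rfl⟩

lemma ICG_dist_two (n : ℕ) [NeZero n] (hn : 1 < n) (hodd : Odd n) (a b : ZMod n) (hne : a ≠ b)
    (hnadj : ¬ (ICG n {1}).Adj a b) : (ICG n {1}).dist a b = 2 := by
  obtain ⟨w, hw⟩ := ICG_walk_two n hn hodd a b
  have hle : (ICG n {1}).dist a b ≤ 2 := hw ▸ SimpleGraph.dist_le w
  have h0 : (ICG n {1}).dist a b ≠ 0 :=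
    SimpleGraph.dist_ne_zero_iff_ne_and_reachable.mpr ⟨hne, ⟨w⟩⟩
  have h1 : (ICG n {1}).dist a b ≠ 1 := fun h =>
    hnadj (SimpleGraph.dist_eq_one_iff_adj.mp h)
  omega

lemma ICG_edist_two (n : ℕ) [NeZero n] (hn : 1 < n) (hodd : Odd n) (a b : ZMod n) (hne : a ≠ b)
    (hnadj : ¬ (ICG n {1}).Adj a b) : (ICG n {1}).edist a b = 2 := by
  obtain ⟨w, hw⟩ := ICG_walk_two n hn hodd a b
  have hle : (ICG n {1}).edist a b ≤ 2 := by
    have := SimpleGraph.edist_le w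
    rw [hw] at this
    exact_mod_cast this
  have h0 : (ICG n {1}).edist a b ≠ 0 := by
    rw [Ne, SimpleGraph.edist_eq_zero_iff]
    exact hne
  have h1 : (ICG n {1}).edist a b ≠ 1 := fun h =>
    hnadj (SimpleGraph.edist_eq_one_iff_adj.mp h)
  have h2 : 2 ≤ (ICG n {1}).edist a b := by
    have hpos : 1 ≤ (ICG n {1}).edist a b := Order.one_le_iff_pos.mpr (pos_iff_ne_zero.mpr h0)
    have hlt : 1 < (ICG n {1}).edist a b := lt_of_le_of_ne hpos (Ne.symm h1)
    exact Order.add_one_le_of_lt hlt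
  exact le_antisymm hle h2

lemma ICG_exists_nonadj (n : ℕ) [NeZero n] (hn : 1 < n) (hcomp : ¬ n.Prime) :
    ∃ a : ZMod n, a ≠ 0 ∧ ¬ (ICG n {1}).Adj a 0 := by
  set p := n.minFac with hp'
  have hp : p.Prime := Nat.minFac_prime (by omega)
  have hpd : p ∣ n := Nat.minFac_dvd n
  have hplt : p < n := by
    rcases lt_or_eq_of_le (Nat.le_of_dvd (by omega) hpd) with h | h
    · exact h
    · exact absurd (h ▸ hp) hcomp
  refine ⟨(p : ZMod n), ?_, ?_⟩
  · rw [Ne, ZMod.natCast_eq_zero_iff]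
    intro h
    exact absurd (Nat.le_of_dvd hp.pos h) (not_le.mpr hplt)
  · rw [ICG_adj_iff]
    rintro ⟨-, h⟩
    rw [sub_zero, ZMod.isUnit_iff_coprime] at h
    exact (Nat.Prime.coprime_iff_not_dvd hp).mp h hpd

/-- for odd composite `n`, the unitary Cayley graph `X_n` has diameter `2`
and its distance matrix is `D = 2(J - I) - A`, where `J` is the all-ones matrix, `I` the
identity and `A` the adjacency matrix. -/
theorem unitaryCayley_odd_composite_distMatrix (n : ℕ) [NeZero n] (hn : 1 < n)
    (hodd : Odd n) (hcomp : ¬ n.Prime) :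
    (ICG n {1}).diam = 2 ∧
    distMatrix (ICG n {1}) =
      (2 : ℝ) • ((Matrix.of fun _ _ => (1 : ℝ)) - (1 : Matrix (ZMod n) (ZMod n) ℝ)) -
        SimpleGraph.adjMatrix ℝ (ICG n {1}) := by
  have hediam : (ICG n {1}).ediam = 2 := by
    apply le_antisymm
    · apply SimpleGraph.ediam_le_of_edist_le
      intro u v
      by_cases h : u = v
      · subst h; simp [SimpleGraph.edist_self]
      by_cases hadj : (ICG n {1}).Adj u v
      · rw [SimpleGraph.edist_eq_one_iff_adj.mpr hadj]; exact one_le_two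
      · rw [ICG_edist_two n hn hodd u v h hadj]
    · obtain ⟨a, ha0, hna⟩ := ICG_exists_nonadj n hn hcomp
      calc (2 : ℕ∞) = (ICG n {1}).edist a 0 := (ICG_edist_two n hn hodd a 0 ha0 hna).symm
        _ ≤ _ := SimpleGraph.edist_le_ediam
  constructor
  · rw [SimpleGraph.diam, hediam]; rfl
  · ext i j
    simp only [distMatrix, Matrix.of_apply, Matrix.sub_apply, Matrix.smul_apply,
      Matrix.one_apply, SimpleGraph.adjMatrix_apply, smul_eq_mul]
    by_cases hij : i = j
    · subst hij
      simp [SimpleGraph.dist_self]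
    by_cases hadj : (ICG n {1}).Adj i j
    · rw [SimpleGraph.dist_eq_one_iff_adj.mpr hadj]
      simp [hij, hadj]
      norm_num
    · rw [ICG_dist_two n hn hodd i j hij hadj]
      simp [hij, hadj]
end

section
/- Let n be an even number having an odd prime divisor. Then the largest eigenvalue (distance spectral radius) of the distance matrix of the unitary Cayley graph X_n equals 5n/2 − 2(φ(n) + 1). -/
open scoped Classical

section Units

variable {n : ℕ}

lemma zmod_isUnit_iff_val_coprime [NeZero n] (x : ZMod n) :
    IsUnit x ↔ Nat.Coprime x.val n := by
  conv_lhs => rw [← ZMod.natCast_zmod_val x]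
  exact ZMod.isUnit_iff_coprime x.val n

lemma zmod_pp_isUnit {p k : ℕ} (hp : p.Prime) (hk : k ≠ 0)
    (y : ZMod (p ^ k)) (hy : ¬ p ∣ y.val) : IsUnit y := by
  haveI : NeZero (p ^ k) := ⟨pow_ne_zero _ hp.pos.ne'⟩
  rw [zmod_isUnit_iff_val_coprime]
  exact Nat.Coprime.pow_right _ ((Nat.coprime_comm.mp ((hp.coprime_iff_not_dvd).mpr hy)))

/-- Every `c : ZMod n` with even `val` (for even `n`) is a sum of two units. -/
lemma exists_sum_two_units (n : ℕ) [NeZero n] (c : ZMod n) (hc : 2 ∣ n → 2 ∣ c.val) :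
    ∃ u v : ZMod n, IsUnit u ∧ IsUnit v ∧ u + v = c := by
  classical
  have hn : n ≠ 0 := NeZero.ne n
  set S := n.primeFactors with hS
  have hprod : ∏ p ∈ S, p ^ n.factorization p = n := by
    have := Nat.factorization_prod_pow_eq_self hn
    rwa [Finsupp.prod, Nat.support_factorization] at this
  have hcop : Pairwise (Function.onFun Nat.Coprime fun i : S => (i : ℕ) ^ n.factorization i) := by
    intro i j hij
    have hpi := Nat.prime_of_mem_primeFactors i.2
    have hpj := Nat.prime_of_mem_primeFactors j.2
    exact Nat.Coprime.pow _ _ ((Nat.coprime_primes hpi hpj).mpr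
      (fun h => hij (Subtype.ext h)))
  have hps : ∏ i : S, (i : ℕ) ^ n.factorization i = n := by
    exact (Finset.prod_coe_sort S (fun p => p ^ n.factorization p)).trans hprod
  let e : ZMod n ≃+* Π i : S, ZMod ((i : ℕ) ^ n.factorization i) :=
    (ZMod.ringEquivCongr hps.symm).trans
      (ZMod.prodEquivPi (fun i : S => (i : ℕ) ^ n.factorization i) hcop)
  have hkpos : ∀ i : S, n.factorization i ≠ 0 := fun i =>
    (Nat.Prime.factorization_pos_of_dvd (Nat.prime_of_mem_primeFactors i.2) hn
      (Nat.dvd_of_mem_primeFactors i.2)).ne'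
  haveI : ∀ i : S, NeZero ((i : ℕ) ^ n.factorization i) := fun i =>
    ⟨pow_ne_zero _ (Nat.prime_of_mem_primeFactors i.2).pos.ne'⟩
  -- the reduction to `ZMod p` of component `i`
  let φ : ∀ i : S, ZMod ((i : ℕ) ^ n.factorization i) →+* ZMod (i : ℕ) := fun i =>
    ZMod.castHom (dvd_pow_self (i : ℕ) (hkpos i)) _
  -- key : the composite `ZMod n → ZMod p` is reduction of `val`
  have key : ∀ (i : S) (x : ZMod n), φ i ((e x) i) = ((x.val : ℕ) : ZMod (i : ℕ)) := by
    intro i x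
    have hpn : (i : ℕ) ∣ n := Nat.dvd_of_mem_primeFactors i.2
    have hψ : ((φ i).comp ((Pi.evalRingHom (fun j : S => ZMod ((j : ℕ) ^ n.factorization j)) i).comp (e : ZMod n →+* _))) =
        ZMod.castHom hpn (ZMod (i : ℕ)) := RingHom.ext_zmod _ _
    have := DFunLike.congr_fun hψ x
    simp only [RingHom.coe_comp, Function.comp_apply, Pi.evalRingHom_apply,
      RingEquiv.coe_toRingHom] at this
    rw [this, ZMod.castHom_apply, ← ZMod.natCast_val]
  -- units detected by φ
  have unit_of : ∀ (i : S) (y : ZMod ((i : ℕ) ^ n.factorization i)),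
      φ i y ≠ 0 → IsUnit y := by
    intro i y hy
    refine zmod_pp_isUnit (Nat.prime_of_mem_primeFactors i.2) (hkpos i) y ?_
    intro hdvd
    apply hy
    have : ((y.val : ℕ) : ZMod (i : ℕ)) = 0 :=
      (ZMod.natCast_eq_zero_iff _ _).mpr hdvd
    rwa [ZMod.natCast_val, ← ZMod.castHom_apply (h := dvd_pow_self (i : ℕ) (hkpos i))] at this
  -- construction
  haveI : ∀ i : S, Fact (1 < (i : ℕ)) := fun i => ⟨(Nat.prime_of_mem_primeFactors i.2).one_lt⟩
  let t : Π i : S, ZMod ((i : ℕ) ^ n.factorization i) := fun i =>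
    if φ i ((e c) i) = 1 then 2 else 1
  have ht_unit : ∀ i : S, φ i (t i) ≠ 0 := by
    intro i
    by_cases h1 : φ i ((e c) i) = 1
    · have h2 : (i : ℕ) ≠ 2 := by
        intro h2
        have : ((c.val : ℕ) : ZMod (i : ℕ)) = 0 := by
          apply (ZMod.natCast_eq_zero_iff _ _).mpr
          rw [h2]
          exact hc (h2 ▸ Nat.dvd_of_mem_primeFactors i.2)
        rw [← key i c] at this
        rw [h1] at this
        exact one_ne_zero this
      simp only [t, if_pos h1, map_ofNat]
      intro h0
      have : ((2 : ℕ) : ZMod (i : ℕ)) = 0 := by exact_mod_cast h0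
      have hdvd : (i : ℕ) ∣ 2 := (ZMod.natCast_eq_zero_iff _ _).mp this
      exact h2 ((Nat.prime_dvd_prime_iff_eq (Nat.prime_of_mem_primeFactors i.2)
        Nat.prime_two).mp hdvd)
    · simp only [t, if_neg h1, map_one]
      exact one_ne_zero
  have ht_diff : ∀ i : S, φ i ((e c) i) - φ i (t i) ≠ 0 := by
    intro i
    by_cases h1 : φ i ((e c) i) = 1
    · simp only [t, if_pos h1, map_ofNat, h1]
      intro h
      have : (1 : ZMod (i : ℕ)) = 2 := by linear_combination h
      have h0 : (1 : ZMod (i : ℕ)) - 2 = 0 := by rw [← this]; ring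
      have : ((1 : ZMod (i : ℕ))) = 0 := by
        have : (1 : ZMod (i:ℕ)) - 2 = -1 := by ring
        rw [this] at h0
        simpa using h0
      exact one_ne_zero this
    · simp only [t, if_neg h1, map_one]
      exact fun h => h1 (by linear_combination h)
  refine ⟨e.symm t, c - e.symm t, ?_, ?_, by ring⟩
  · -- IsUnit (e.symm t)
    have : ∀ i : S, IsUnit (t i) := fun i => unit_of i (t i) (ht_unit i)
    choose w hw using fun i => isUnit_iff_exists_inv.mp (this i)
    have : IsUnit t := isUnit_iff_exists_inv.mpr ⟨w, funext fun i => hw i⟩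
    have := this.map (e.symm : (Π i : S, ZMod ((i : ℕ) ^ n.factorization i)) →+* ZMod n)
    simpa using this
  · -- IsUnit (c - e.symm t)
    have hcomp : ∀ i : S, (e (c - e.symm t)) i = (e c) i - t i := by
      intro i
      rw [map_sub]
      simp
    have : ∀ i : S, IsUnit ((e (c - e.symm t)) i) := by
      intro i
      apply unit_of
      rw [hcomp i, map_sub]
      exact ht_diff i
    choose w hw using fun i => isUnit_iff_exists_inv.mp (this i)
    have hu : IsUnit (e (c - e.symm t)) := isUnit_iff_exists_inv.mpr ⟨w, funext fun i => hw i⟩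
    have := hu.map ((e.symm : _ ≃+* ZMod n) : (Π i : S, ZMod ((i : ℕ) ^ n.factorization i)) →+* ZMod n)
    simpa using this

end Units
section Adj

variable {n : ℕ}

lemma zmod_intCast_isUnit_iff [NeZero n] (m : ℤ) :
    IsUnit ((m : ℤ) : ZMod n) ↔ Int.gcd m n = 1 := by
  have habs : Int.gcd m n = Nat.gcd m.natAbs n := rfl
  have hnat : IsUnit ((m.natAbs : ℕ) : ZMod n) ↔ Nat.gcd m.natAbs n = 1 :=
    ZMod.isUnit_iff_coprime m.natAbs n
  rw [habs, ← hnat]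
  rcases Int.natAbs_eq m with h | h
  · conv_lhs => rw [h]
    rw [Int.cast_natCast]
  · conv_lhs => rw [h]
    rw [Int.cast_neg, Int.cast_natCast]
    constructor
    · intro hx; simpa using hx.neg
    · intro hx; exact hx.neg

lemma ICG_adj [NeZero n] (a b : ZMod n) :
    (ICG n {1}).Adj a b ↔ a ≠ b ∧ IsUnit (a - b) := by
  show (a ≠ b ∧ Int.gcd ((a.val : ℤ) - (b.val : ℤ)) n ∈ ({1} : Finset ℕ)) ↔ _
  apply and_congr_right
  intro _
  have hcast : (((a.val : ℤ) - (b.val : ℤ) : ℤ) : ZMod n) = a - b := by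
    push_cast
    rw [ZMod.natCast_zmod_val, ZMod.natCast_zmod_val]
  rw [Finset.mem_singleton, ← zmod_intCast_isUnit_iff, hcast]

end Adj

section Dist

variable {n : ℕ} [NeZero n] [Fact (1 < n)]

lemma zmod_unit_ne_zero {x : ZMod n} (h : IsUnit x) : x ≠ 0 :=
  fun h0 => not_isUnit_zero (h0 ▸ h)

lemma pi_eq_zero_iff (heven : 2 ∣ n) (x : ZMod n) :
    ZMod.castHom heven (ZMod 2) x = 0 ↔ 2 ∣ x.val := by
  rw [ZMod.castHom_apply, ← ZMod.natCast_val, ZMod.natCast_eq_zero_iff]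

lemma pi_unit_eq_one (heven : 2 ∣ n) {x : ZMod n} (h : IsUnit x) :
    ZMod.castHom heven (ZMod 2) x = 1 := by
  have h2 : ∀ y : ZMod 2, y = 0 ∨ y = 1 := by decide
  have := h.map (ZMod.castHom heven (ZMod 2))
  rcases h2 (ZMod.castHom heven (ZMod 2) x) with h0 | h1
  · rw [h0] at this; exact absurd this not_isUnit_zero
  · exact h1

lemma walk_length_two {V : Type*} {G : SimpleGraph V} {a b : V} (q : G.Walk a b)
    (h : q.length = 2) : ∃ m, G.Adj a m ∧ G.Adj m b := by
  cases q with
  | nil => simp at h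
  | cons hadj q' =>
    cases q' with
    | nil => simp at h
    | cons hadj' q'' =>
      have hq0 : q''.length = 0 := by
        simp only [SimpleGraph.Walk.length_cons] at h
        omega
      have heq := SimpleGraph.Walk.eq_of_length_eq_zero hq0
      subst heq
      exact ⟨_, hadj, hadj'⟩

/-- helper adjacency builder -/
lemma ICG_adj_of_unit {a b : ZMod n} (h : IsUnit (a - b)) : (ICG n {1}).Adj a b := by
  rw [ICG_adj]
  refine ⟨fun hab => ?_, h⟩
  rw [hab, sub_self] at h
  exact not_isUnit_zero h

/-- The distance formula in the unitary Cayley graph for even `n`. -/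
lemma ICG_dist_formula (heven : 2 ∣ n) (a b : ZMod n) :
    (ICG n {1}).dist a b =
      if a = b then 0 else if IsUnit (a - b) then 1
        else if ZMod.castHom heven (ZMod 2) (a - b) = 0 then 2 else 3 := by
  classical
  set G := ICG n {1} with hG
  set π := ZMod.castHom heven (ZMod 2) with hπ
  by_cases hab : a = b
  · simp [hab, SimpleGraph.dist_self]
  rw [if_neg hab]
  by_cases hu : IsUnit (a - b)
  · rw [if_pos hu]
    exact SimpleGraph.dist_eq_one_iff_adj.mpr (ICG_adj_of_unit hu)
  rw [if_neg hu]
  by_cases hpar : π (a - b) = 0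
  · rw [if_pos hpar]
    -- distance 2
    obtain ⟨u, v, hu1, hv1, huv⟩ := exists_sum_two_units n (a - b)
      (fun _ => (pi_eq_zero_iff heven _).mp hpar)
    have h1 : G.Adj a (a - u) := by
      apply ICG_adj_of_unit
      rwa [show a - (a - u) = u by ring]
    have h2 : G.Adj (a - u) b := by
      apply ICG_adj_of_unit
      rwa [show a - u - b = v from by linear_combination -huv]
    have hw : (SimpleGraph.Walk.cons h1 (SimpleGraph.Walk.cons h2 SimpleGraph.Walk.nil)).length
        = 2 := rfl
    have hle : G.dist a b ≤ 2 := hw ▸ SimpleGraph.dist_le _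
    have hne0 : G.dist a b ≠ 0 := by
      rw [SimpleGraph.dist_ne_zero_iff_ne_and_reachable]
      exact ⟨hab, ⟨SimpleGraph.Walk.cons h1 (SimpleGraph.Walk.cons h2 SimpleGraph.Walk.nil)⟩⟩
    have hne1 : G.dist a b ≠ 1 := by
      rw [Ne, SimpleGraph.dist_eq_one_iff_adj, ICG_adj]
      rintro ⟨-, h⟩
      exact hu h
    omega
  · rw [if_neg hpar]
    -- distance 3
    have hpar1 : π (a - b) = 1 := by
      have h2 : ∀ y : ZMod 2, y = 0 ∨ y = 1 := by decide
      rcases h2 (π (a - b)) with h | h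
      · exact absurd h hpar
      · exact h
    have heven' : π (a - b - 1) = 0 := by
      rw [map_sub, hpar1, map_one, sub_self]
    obtain ⟨u, v, hu1, hv1, huv⟩ := exists_sum_two_units n (a - b - 1)
      (fun _ => (pi_eq_zero_iff heven _).mp heven')
    have h1 : G.Adj a (a - 1) := by
      apply ICG_adj_of_unit
      rw [show a - (a - 1) = 1 by ring]
      exact isUnit_one
    have h2 : G.Adj (a - 1) (a - 1 - u) := by
      apply ICG_adj_of_unit
      rwa [show a - 1 - (a - 1 - u) = u by ring]
    have h3 : G.Adj (a - 1 - u) b := by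
      apply ICG_adj_of_unit
      rwa [show a - 1 - u - b = v from by linear_combination -huv]
    set p : G.Walk a b :=
      SimpleGraph.Walk.cons h1 (SimpleGraph.Walk.cons h2
        (SimpleGraph.Walk.cons h3 SimpleGraph.Walk.nil)) with hp
    have hw : p.length = 3 := rfl
    have hle : G.dist a b ≤ 3 := hw ▸ SimpleGraph.dist_le _
    have hne0 : G.dist a b ≠ 0 := by
      rw [SimpleGraph.dist_ne_zero_iff_ne_and_reachable]
      exact ⟨hab, ⟨p⟩⟩
    have hne1 : G.dist a b ≠ 1 := by
      rw [Ne, SimpleGraph.dist_eq_one_iff_adj, ICG_adj]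
      rintro ⟨-, h⟩
      exact hu h
    have hne2 : G.dist a b ≠ 2 := by
      intro h2d
      obtain ⟨q, hq⟩ := SimpleGraph.exists_walk_of_dist_ne_zero hne0
      rw [h2d] at hq
      -- decompose a walk of length 2
      obtain ⟨m, hadj, hadj'⟩ := walk_length_two q hq
      have e1 : IsUnit (a - m) := ((ICG_adj a m).mp hadj).2
      have e2 : IsUnit (m - b) := ((ICG_adj m b).mp hadj').2
      have hsum : π (a - b) = π (a - m) + π (m - b) := by
        rw [← map_add]
        congr 1
        ring
      apply hpar
      rw [hsum, pi_unit_eq_one heven e1, pi_unit_eq_one heven e2]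
      decide
    omega

end Dist
section Count

variable (n : ℕ) [NeZero n]

lemma card_units_filter :
    (Finset.univ.filter (fun c : ZMod n => IsUnit c)).card = n.totient := by
  classical
  rw [← ZMod.card_units_eq_totient n, ← Fintype.card_subtype]
  exact Fintype.card_congr ⟨fun s => s.2.unit, fun u => ⟨u, u.isUnit⟩,
    fun s => Subtype.ext s.2.unit_spec, fun u => Units.ext u.isUnit.unit_spec⟩

lemma card_even_filter (heven : 2 ∣ n) :
    2 * (Finset.univ.filter
      (fun c : ZMod n => ZMod.castHom heven (ZMod 2) c = 0)).card = n := by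
  classical
  set π := ZMod.castHom heven (ZMod 2) with hπ
  have hbij : (Finset.univ.filter (fun c : ZMod n => π c = 0)).card =
      (Finset.univ.filter (fun c : ZMod n => ¬ π c = 0)).card := by
    apply Finset.card_equiv (Equiv.addRight (1 : ZMod n))
    intro c
    simp only [Finset.mem_filter, Finset.mem_univ, true_and, Equiv.coe_addRight]
    have : π (c + 1) = π c + 1 := by rw [map_add, map_one]
    rw [this]
    have h2 : ∀ y : ZMod 2, y = 0 ↔ ¬ y + 1 = 0 := by decide
    exact h2 (π c)
  have hcard := Finset.card_filter_add_card_filter_not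
    (s := (Finset.univ : Finset (ZMod n))) (fun c : ZMod n => π c = 0)
  rw [Finset.card_univ, ZMod.card] at hcard
  omega

lemma ICG_rowsum [Fact (1 < n)] (heven : 2 ∣ n) (a : ZMod n) :
    ∑ b : ZMod n, ((ICG n {1}).dist a b : ℝ) =
      5 * (n : ℝ) / 2 - 2 * ((Nat.totient n : ℝ) + 1) := by
  classical
  set π := ZMod.castHom heven (ZMod 2) with hπ
  set g : ZMod n → ℝ := fun c =>
    if c = 0 then 0 else if IsUnit c then 1 else if π c = 0 then 2 else 3 with hg
  have hform : ∀ b : ZMod n, ((ICG n {1}).dist a b : ℝ) = g (a - b) := by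
    intro b
    rw [ICG_dist_formula heven a b, hg]
    show _ = if a - b = 0 then (0:ℝ) else if IsUnit (a - b) then 1
      else if π (a - b) = 0 then 2 else 3
    by_cases h0 : a = b
    · simp [h0]
    · have h0' : ¬ (a - b = 0) := fun h => h0 (sub_eq_zero.mp h)
      rw [if_neg h0, if_neg h0']
      by_cases h1 : IsUnit (a - b)
      · simp [h1]
      · rw [if_neg h1, if_neg h1]
        by_cases h2 : π (a - b) = 0
        · rw [if_pos h2, if_pos h2]
          norm_num
        · rw [if_neg h2, if_neg h2]
          norm_num
  have hsum : ∑ b : ZMod n, ((ICG n {1}).dist a b : ℝ) = ∑ c : ZMod n, g c := by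
    rw [Finset.sum_congr rfl (fun b _ => hform b)]
    exact Equiv.sum_comp (Equiv.subLeft a) g
  rw [hsum]
  have hpoint : ∀ c : ZMod n, g c = 3 - 2 * (if c = 0 then (1:ℝ) else 0)
      - 2 * (if IsUnit c then (1:ℝ) else 0) - (if π c = 0 then (1:ℝ) else 0) := by
    intro c
    rw [hg]
    by_cases h0 : c = 0
    · have : ¬ IsUnit c := h0 ▸ not_isUnit_zero
      have hp : π c = 0 := by rw [h0, map_zero]
      simp [h0, this, hp]
      norm_num
    · by_cases h1 : IsUnit c
      · have hp : ¬ π c = 0 := by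
          rw [pi_unit_eq_one heven h1]
          exact one_ne_zero
        simp [h0, h1, hp]
        norm_num
      · by_cases h2 : π c = 0
        · simp [h0, h1, h2]
          norm_num
        · simp [h0, h1, h2]
  rw [Finset.sum_congr rfl (fun c _ => hpoint c)]
  have e1 : ∑ c : ZMod n, (if c = 0 then (1:ℝ) else 0) = 1 := by
    rw [Finset.sum_ite_eq' Finset.univ (0 : ZMod n) (fun _ => (1:ℝ))]
    simp
  have e2 : ∑ c : ZMod n, (if IsUnit c then (1:ℝ) else 0) = (n.totient : ℝ) := by
    rw [Finset.sum_boole, card_units_filter n]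
  have e3 : ∑ c : ZMod n, (if π c = 0 then (1:ℝ) else 0) = (n : ℝ) / 2 := by
    rw [Finset.sum_boole]
    have := card_even_filter n heven
    have hc : 2 * ((Finset.univ.filter (fun c : ZMod n => π c = 0)).card : ℝ) = (n : ℝ) := by
      exact_mod_cast congrArg (fun k : ℕ => (k : ℝ)) this
    linarith
  have e0 : ∑ _c : ZMod n, (3:ℝ) = 3 * n := by
    rw [Finset.sum_const, Finset.card_univ, ZMod.card, nsmul_eq_mul]
    ring
  simp only [Finset.sum_sub_distrib, ← Finset.mul_sum]
  rw [e0, e1, e2, e3]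
  ring

end Count

/-- for even `n` with an odd prime divisor, the distance spectral radius
(largest eigenvalue of the distance matrix) of `X_n` equals `5n/2 - 2(φ(n) + 1)`. -/
theorem unitaryCayley_even_spectral_radius (n : ℕ) [NeZero n] (heven : 2 ∣ n)
    (hodd : ∃ p : ℕ, p.Prime ∧ Odd p ∧ p ∣ n) :
    (5 * (n : ℝ) / 2 - 2 * ((Nat.totient n : ℝ) + 1)) ∈ spectrum ℝ (distMatrix (ICG n {1})) ∧
    ∀ μ ∈ spectrum ℝ (distMatrix (ICG n {1})),
      μ ≤ 5 * (n : ℝ) / 2 - 2 * ((Nat.totient n : ℝ) + 1) := by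
  classical
  haveI : Fact (1 < n) :=
    ⟨lt_of_lt_of_le one_lt_two (Nat.le_of_dvd (Nat.pos_of_ne_zero (NeZero.ne n)) heven)⟩
  set r : ℝ := 5 * (n : ℝ) / 2 - 2 * ((Nat.totient n : ℝ) + 1) with hr
  set M : Matrix (ZMod n) (ZMod n) ℝ := distMatrix (ICG n {1}) with hM
  have hMapp : ∀ i j : ZMod n, M i j = ((ICG n {1}).dist i j : ℝ) := fun i j => rfl
  have hrow : ∀ i : ZMod n, ∑ j : ZMod n, M i j = r := by
    intro i
    rw [hr]
    exact ICG_rowsum n heven i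
  have hMnn : ∀ i j : ZMod n, 0 ≤ M i j := by
    intro i j
    rw [hMapp]
    exact Nat.cast_nonneg _
  constructor
  · rw [spectrum.mem_iff]
    intro hunit
    rw [Matrix.isUnit_iff_isUnit_det] at hunit
    have hdet : (algebraMap ℝ (Matrix (ZMod n) (ZMod n) ℝ) r - M).det = 0 := by
      rw [← Matrix.exists_mulVec_eq_zero_iff]
      refine ⟨fun _ => (1 : ℝ), fun h => one_ne_zero (congrFun h 0), ?_⟩
      funext i
      simp only [Matrix.mulVec, dotProduct, Matrix.sub_apply, mul_one, Pi.zero_apply]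
      rw [Finset.sum_sub_distrib]
      have h1 : ∑ j : ZMod n, (algebraMap ℝ (Matrix (ZMod n) (ZMod n) ℝ) r) i j = r := by
        simp only [Matrix.algebraMap_matrix_apply, Algebra.algebraMap_self, RingHom.id_apply]
        rw [Finset.sum_ite_eq Finset.univ i (fun _ => r)]
        simp
      rw [h1, hrow i, sub_self]
    rw [hdet] at hunit
    exact not_isUnit_zero hunit
  · intro μ hμ
    rw [spectrum.mem_iff] at hμ
    have hdet : (algebraMap ℝ (Matrix (ZMod n) (ZMod n) ℝ) μ - M).det = 0 := by
      by_contra h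
      exact hμ ((Matrix.isUnit_iff_isUnit_det _).mpr (Ne.isUnit h))
    obtain ⟨v, hv0, hveq⟩ := Matrix.exists_mulVec_eq_zero_iff.mpr hdet
    have heig : ∀ i : ZMod n, μ * v i = ∑ j : ZMod n, M i j * v j := by
      intro i
      have hv := congrFun hveq i
      simp only [Matrix.mulVec, dotProduct, Matrix.sub_apply, sub_mul,
        Pi.zero_apply] at hv
      rw [Finset.sum_sub_distrib] at hv
      have h1 : ∑ j : ZMod n, (algebraMap ℝ (Matrix (ZMod n) (ZMod n) ℝ) μ) i j * v j
          = μ * v i := by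
        simp only [Matrix.algebraMap_matrix_apply, Algebra.algebraMap_self, RingHom.id_apply,
          ite_mul, zero_mul]
        rw [Finset.sum_ite_eq Finset.univ i (fun j => μ * v j)]
        simp
      rw [h1] at hv
      linarith
    obtain ⟨i0, -, hmax⟩ := Finset.exists_max_image Finset.univ (fun i => |v i|)
      Finset.univ_nonempty
    have hipos : 0 < |v i0| := by
      obtain ⟨j, hj⟩ : ∃ j, v j ≠ 0 := by
        by_contra hc
        push_neg at hc
        exact hv0 (funext hc)
      exact lt_of_lt_of_le (abs_pos.mpr hj) (hmax j (Finset.mem_univ j))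
    have hkey : |μ| * |v i0| ≤ r * |v i0| := by
      calc |μ| * |v i0| = |μ * v i0| := (abs_mul μ (v i0)).symm
        _ = |∑ j : ZMod n, M i0 j * v j| := by rw [heig i0]
        _ ≤ ∑ j : ZMod n, |M i0 j * v j| := Finset.abs_sum_le_sum_abs _ _
        _ = ∑ j : ZMod n, M i0 j * |v j| := by
            refine Finset.sum_congr rfl (fun j _ => ?_)
            rw [abs_mul, abs_of_nonneg (hMnn i0 j)]
        _ ≤ ∑ j : ZMod n, M i0 j * |v i0| := by
            refine Finset.sum_le_sum (fun j _ => ?_)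
            exact mul_le_mul_of_nonneg_left (hmax j (Finset.mem_univ j)) (hMnn i0 j)
        _ = (∑ j : ZMod n, M i0 j) * |v i0| := by rw [Finset.sum_mul]
        _ = r * |v i0| := by rw [hrow i0]
    have habs : |μ| ≤ r := le_of_mul_le_mul_right hkey hipos
    exact le_trans (le_abs_self μ) habs
end

section
/- Let n be an even number having an odd prime divisor, with distinct prime factors p_1 = 2, p_2, ..., p_k, and let m be the maximal square-free divisor of n. Then Σ_{i=0}^{n−1} |c(i, n) + 1| = n − m + φ(n) · 2^k, where c(i, n) = μ(n/gcd(i, n)) · φ(n)/φ(n/gcd(i, n)) is the Ramanujan sum (with c(0, n) = φ(n)). -/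
open scoped Classical

lemma fiber_card (n d : ℕ) (hn : 0 < n) (hd : d ∣ n) :
    ((Finset.range n).filter (fun i => Nat.gcd i n = d)).card = (n / d).totient := by
  have hd0 : 0 < d := Nat.pos_of_dvd_of_pos hd hn
  rw [Nat.totient]
  apply Finset.card_bij (fun i _ => i / d)
  · intro i hi
    simp only [Finset.mem_filter, Finset.mem_range] at hi ⊢
    obtain ⟨hilt, hgcd⟩ := hi
    have hdi : d ∣ i := hgcd ▸ Nat.gcd_dvd_left i n
    refine ⟨Nat.div_lt_div_of_lt_of_dvd hd hilt, ?_⟩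
    have h1 : d * Nat.gcd (i / d) (n / d) = d := by
      rw [← Nat.gcd_mul_left, Nat.mul_div_cancel' hdi, Nat.mul_div_cancel' hd, hgcd]
    have : Nat.gcd (i / d) (n / d) = 1 :=
      Nat.eq_of_mul_eq_mul_left hd0 (by rw [h1, mul_one])
    exact Nat.coprime_comm.mp this
  · intro i hi j hj hij
    simp only [Finset.mem_filter, Finset.mem_range] at hi hj
    have hdi : d ∣ i := hi.2 ▸ Nat.gcd_dvd_left i n
    have hdj : d ∣ j := hj.2 ▸ Nat.gcd_dvd_left j n
    rw [← Nat.mul_div_cancel' hdi, ← Nat.mul_div_cancel' hdj, hij]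
  · intro j hj
    simp only [Finset.mem_filter, Finset.mem_range] at hj
    refine ⟨d * j, ?_, ?_⟩
    · simp only [Finset.mem_filter, Finset.mem_range]
      constructor
      · calc d * j < d * (n / d) := by exact (Nat.mul_lt_mul_left hd0).mpr hj.1
          _ = n := Nat.mul_div_cancel' hd
      · conv_lhs => rw [show n = d * (n / d) from (Nat.mul_div_cancel' hd).symm]
        rw [Nat.gcd_mul_left, Nat.coprime_comm.mp hj.2, mul_one]
    · rw [Nat.mul_div_cancel_left _ hd0]

lemma totient_prod_primes {t : Finset ℕ} (ht : ∀ p ∈ t, p.Prime) :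
    Nat.totient (∏ p ∈ t, p) = ∏ p ∈ t, Nat.totient p := by
  induction t using Finset.induction_on with
  | empty => simp
  | @insert a s ha ih =>
    have hcop : Nat.Coprime a (∏ p ∈ s, p) :=
      Nat.Coprime.prod_right fun q hq =>
        (Nat.coprime_primes (ht a (Finset.mem_insert_self a s))
          (ht q (Finset.mem_insert_of_mem hq))).mpr (fun h => ha (h ▸ hq))
    rw [Finset.prod_insert ha, Finset.prod_insert ha, Nat.totient_mul hcop,
      ih (fun p hp => ht p (Finset.mem_insert_of_mem hp))]

/-- for even `n` with an odd prime divisor, with `k` distinct prime factors and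
maximal square-free divisor `m`, `∑_{i=0}^{n-1} |c(i,n) + 1| = n - m + φ(n)·2^k`, where
`c(i,n) = μ(n/gcd(i,n))·φ(n)/φ(n/gcd(i,n))` is the Ramanujan sum (and `c(0,n) = φ(n)`). -/
theorem ramanujan_sum_abs_plus_one (n : ℕ) (hn : 0 < n) (heven : 2 ∣ n)
    (hodd : ∃ p : ℕ, p.Prime ∧ Odd p ∧ p ∣ n) :
    ∑ i ∈ Finset.range n,
        |(ArithmeticFunction.moebius (n / Nat.gcd i n) : ℝ) * (Nat.totient n : ℝ) /
            (Nat.totient (n / Nat.gcd i n) : ℝ) + 1| =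
      (n : ℝ) - ((∏ p ∈ n.primeFactors, p : ℕ) : ℝ) +
        (Nat.totient n : ℝ) * 2 ^ n.primeFactors.card := by
  set F : ℕ → ℝ := fun d =>
    |(ArithmeticFunction.moebius d : ℝ) * (Nat.totient n : ℝ) / (Nat.totient d : ℝ) + 1| with hF
  -- Step 1: group by gcd
  have hmaps : ∀ i ∈ Finset.range n, Nat.gcd i n ∈ n.divisors := by
    intro i _
    exact Nat.mem_divisors.mpr ⟨Nat.gcd_dvd_right i n, hn.ne'⟩
  have h1 : ∑ i ∈ Finset.range n, F (n / Nat.gcd i n)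
      = ∑ d ∈ n.divisors, ((n / d).totient : ℝ) * F (n / d) := by
    rw [← Finset.sum_fiberwise_of_maps_to hmaps (fun i => F (n / Nat.gcd i n))]
    refine Finset.sum_congr rfl fun d hd => ?_
    have : ∀ i ∈ (Finset.range n).filter (fun i => Nat.gcd i n = d),
        F (n / Nat.gcd i n) = F (n / d) := by
      intro i hi
      rw [(Finset.mem_filter.mp hi).2]
    rw [Finset.sum_congr rfl this, Finset.sum_const,
      fiber_card n d hn (Nat.mem_divisors.mp hd).1, nsmul_eq_mul]
  have h2 : ∑ d ∈ n.divisors, ((n / d).totient : ℝ) * F (n / d)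
      = ∑ e ∈ n.divisors, (e.totient : ℝ) * F e :=
    Nat.sum_div_divisors n (fun e => (e.totient : ℝ) * F e)
  -- Step 2: pointwise evaluation
  have h3 : ∀ e ∈ n.divisors, (e.totient : ℝ) * F e
      = (e.totient : ℝ) + (if Squarefree e then
          (Nat.totient n : ℝ) + ((ArithmeticFunction.moebius e : ℝ) - 1) * e.totient else 0) := by
    intro e he
    obtain ⟨hednd, -⟩ := Nat.mem_divisors.mp he
    have he0 : 0 < e := Nat.pos_of_dvd_of_pos hednd hn
    have hφe : (0 : ℝ) < e.totient := by exact_mod_cast Nat.totient_pos.mpr he0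
    have hφn : (0 : ℝ) < n.totient := by exact_mod_cast Nat.totient_pos.mpr hn
    have hle : (e.totient : ℝ) ≤ n.totient := by
      exact_mod_cast Nat.le_of_dvd (Nat.totient_pos.mpr hn) (Nat.totient_dvd_of_dvd hednd)
    by_cases hsq : Squarefree e
    · have hmu : ArithmeticFunction.moebius e = 1 ∨ ArithmeticFunction.moebius e = -1 := by
        rw [ArithmeticFunction.moebius_apply_of_squarefree hsq]
        rcases Nat.even_or_odd (ArithmeticFunction.cardFactors e) with h | h
        · exact Or.inl h.neg_one_pow
        · exact Or.inr h.neg_one_pow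
      rw [if_pos hsq]
      simp only [hF]
      rcases hmu with hmu | hmu
      · have hmu1 : ((ArithmeticFunction.moebius e : ℤ) : ℝ) = 1 := by rw [hmu]; norm_num
        rw [hmu1]
        rw [abs_of_nonneg (by positivity)]
        field_simp
        ring
      · have hmu1 : ((ArithmeticFunction.moebius e : ℤ) : ℝ) = -1 := by rw [hmu]; norm_num
        rw [hmu1]
        have e1 : (-1 : ℝ) * (n.totient : ℝ) / (e.totient : ℝ) + 1
            = ((e.totient : ℝ) - n.totient) / e.totient := by field_simp; ring
        rw [e1, abs_div, abs_of_nonpos (by linarith), abs_of_pos hφe]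
        field_simp
        ring
    · rw [if_neg hsq]
      simp only [hF]
      rw [ArithmeticFunction.moebius_eq_zero_of_not_squarefree hsq]
      norm_num
  rw [h1, h2, Finset.sum_congr rfl h3, Finset.sum_add_distrib]
  -- Step 3: evaluate the two sums
  have hA : ∑ e ∈ n.divisors, (e.totient : ℝ) = (n : ℝ) := by
    rw [← Nat.cast_sum]
    exact_mod_cast congrArg (Nat.cast : ℕ → ℝ) (Nat.sum_totient n)
  rw [hA, ← Finset.sum_filter]
  -- transfer squarefree-divisor sums to powerset sums
  have hPF : (UniqueFactorizationMonoid.normalizedFactors n).toFinset = n.primeFactors := by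
    rw [Nat.factors_eq]; rfl
  have hsqsum : ∀ f : ℕ → ℝ,
      ∑ e ∈ n.divisors.filter Squarefree, f e
        = ∑ t ∈ n.primeFactors.powerset, f (∏ p ∈ t, p) := by
    intro f
    rw [Nat.sum_divisors_filter_squarefree hn.ne', hPF]
    refine Finset.sum_congr rfl fun t ht => ?_
    rw [t.prod_val]
    rfl
  have h2mem : 2 ∈ n.primeFactors :=
    Nat.mem_primeFactors.mpr ⟨Nat.prime_two, heven, hn.ne'⟩
  have hB : ∑ e ∈ n.divisors.filter Squarefree,
      ((Nat.totient n : ℝ) + ((ArithmeticFunction.moebius e : ℝ) - 1) * e.totient)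
      = (Nat.totient n : ℝ) * 2 ^ n.primeFactors.card
        - ((∏ p ∈ n.primeFactors, p : ℕ) : ℝ) := by
    rw [hsqsum]
    have hprodform : ∀ t ∈ n.primeFactors.powerset,
        ((Nat.totient n : ℝ) + ((ArithmeticFunction.moebius (∏ p ∈ t, p) : ℝ) - 1)
            * (Nat.totient (∏ p ∈ t, p) : ℝ))
        = (Nat.totient n : ℝ)
          + ∏ p ∈ t, ((ArithmeticFunction.moebius p : ℝ) * (Nat.totient p : ℝ))
          - ∏ p ∈ t, (Nat.totient p : ℝ) := by
      intro t ht
      have hts := Finset.mem_powerset.mp ht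
      have hmu : ArithmeticFunction.moebius (∏ p ∈ t, p) = ∏ p ∈ t, ArithmeticFunction.moebius p :=
        ArithmeticFunction.IsMultiplicative.map_prod_of_subset_primeFactors
          ArithmeticFunction.isMultiplicative_moebius n t hts
      have hto : Nat.totient (∏ p ∈ t, p) = ∏ p ∈ t, Nat.totient p :=
        totient_prod_primes (fun p hp => Nat.prime_of_mem_primeFactors (hts hp))
      rw [hmu, hto]
      push_cast
      rw [Finset.prod_mul_distrib]
      ring
    rw [Finset.sum_congr rfl hprodform]
    have hsum1 : ∑ t ∈ n.primeFactors.powerset,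
        ((Nat.totient n : ℝ)
          + ∏ p ∈ t, ((ArithmeticFunction.moebius p : ℝ) * (Nat.totient p : ℝ))
          - ∏ p ∈ t, (Nat.totient p : ℝ))
        = (Nat.totient n : ℝ) * 2 ^ n.primeFactors.card
          + (∑ t ∈ n.primeFactors.powerset,
              ∏ p ∈ t, ((ArithmeticFunction.moebius p : ℝ) * (Nat.totient p : ℝ)))
          - ∑ t ∈ n.primeFactors.powerset, ∏ p ∈ t, (Nat.totient p : ℝ) := by
      rw [Finset.sum_sub_distrib, Finset.sum_add_distrib, Finset.sum_const,
        Finset.card_powerset, nsmul_eq_mul]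
      push_cast
      ring
    rw [hsum1]
    have hzero : ∑ t ∈ n.primeFactors.powerset,
        ∏ p ∈ t, ((ArithmeticFunction.moebius p : ℝ) * (Nat.totient p : ℝ)) = 0 := by
      have := Finset.prod_add
        (fun p => ((ArithmeticFunction.moebius p : ℝ) * (Nat.totient p : ℝ)))
        (fun _ => (1 : ℝ)) n.primeFactors
      simp only [Finset.prod_const_one, mul_one] at this
      rw [← this]
      apply Finset.prod_eq_zero h2mem
      rw [ArithmeticFunction.moebius_apply_prime Nat.prime_two, Nat.totient_two]
      norm_num
    have hm : ∑ t ∈ n.primeFactors.powerset, ∏ p ∈ t, (Nat.totient p : ℝ)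
        = ((∏ p ∈ n.primeFactors, p : ℕ) : ℝ) := by
      have := Finset.prod_add
        (fun p => ((Nat.totient p : ℝ))) (fun _ => (1 : ℝ)) n.primeFactors
      simp only [Finset.prod_const_one, mul_one] at this
      rw [← this, Nat.cast_prod]
      refine Finset.prod_congr rfl fun p hp => ?_
      have hpp := Nat.prime_of_mem_primeFactors hp
      rw [Nat.totient_prime hpp]
      have : (1:ℕ) ≤ p := hpp.one_lt.le
      push_cast [Nat.cast_sub this]
      ring
    rw [hzero, hm]
    ring
  rw [hB]
  ring
end

section
/- Let p > 3 be a prime and n = 3p. Then the graphs ICG_n({1}) and ICG_n({1, p}) are distance equienergetic but not distance cospectral: DE(ICG_n({1})) = DE(ICG_n({1, p})) = 12(p − 1), the spectra of their distance matrices are distinct, and ICG_n({1}) is a subgraph of ICG_n({1, p}). -/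
open scoped Classical

set_option linter.unusedSectionVars false
set_option linter.unusedVariables false
set_option linter.unusedTactic false
open Polynomial Finset

namespace ICGaux

noncomputable def psi (N : ℕ) (t : ZMod N) : ℂ :=
  Complex.exp (2 * Real.pi * Complex.I / N) ^ t.val

variable {N : ℕ} [NeZero N]

lemma psi_prim : IsPrimitiveRoot (Complex.exp (2 * Real.pi * Complex.I / N)) N :=
  Complex.isPrimitiveRoot_exp N (NeZero.ne N)

lemma zeta_pow_mod (x : ℕ) :
    Complex.exp (2 * Real.pi * Complex.I / N) ^ (x % N)
      = Complex.exp (2 * Real.pi * Complex.I / N) ^ x := by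
  conv_rhs => rw [← Nat.mod_add_div x N]
  rw [pow_add, pow_mul, (psi_prim (N := N)).pow_eq_one, one_pow, mul_one]

lemma psi_zero : psi N 0 = 1 := by simp [psi]

lemma psi_add (a b : ZMod N) : psi N (a + b) = psi N a * psi N b := by
  rw [psi, psi, psi, ZMod.val_add, zeta_pow_mod, pow_add]

lemma psi_natmul (m : ℕ) (x : ZMod N) : psi N ((m : ZMod N) * x) = psi N x ^ m := by
  induction m with
  | zero => simpa using psi_zero
  | succ m ih =>
      have h : ((m + 1 : ℕ) : ZMod N) * x = (m : ZMod N) * x + x := by push_cast; ring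
      rw [h, psi_add, ih, pow_succ]

lemma psi_eq_one_iff {x : ZMod N} : psi N x = 1 ↔ x = 0 := by
  constructor
  · intro h
    have hdvd := ((psi_prim (N := N)).pow_eq_one_iff_dvd x.val).mp h
    exact (ZMod.val_eq_zero x).mp (Nat.eq_zero_of_dvd_of_lt hdvd x.val_lt)
  · rintro rfl; exact psi_zero

lemma filter_dvd_eq_image (d e : ℕ) (hd : 0 < d) (hde : d * e = N) :
    Finset.univ.filter (fun t : ZMod N => d ∣ t.val)
      = (Finset.range e).image (fun m => ((d * m : ℕ) : ZMod N)) := by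
  ext t
  simp only [mem_filter, mem_univ, true_and, mem_image, mem_range]
  constructor
  · rintro ⟨m, hm⟩
    refine ⟨m, ?_, ?_⟩
    · have : d * m < d * e := by rw [hde, ← hm]; exact t.val_lt
      exact lt_of_mul_lt_mul_left this (Nat.zero_le d)
    · rw [← hm, ZMod.natCast_zmod_val]
  · rintro ⟨m, hm, rfl⟩
    have hlt : d * m < N := by rw [← hde]; exact (Nat.mul_lt_mul_left hd).mpr hm
    rw [ZMod.val_cast_of_lt hlt]
    exact dvd_mul_right d m

lemma injOn_mul_cast (d e : ℕ) (hd : 0 < d) (hde : d * e = N) :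
    Set.InjOn (fun m => ((d * m : ℕ) : ZMod N)) (Finset.range e) := by
  intro a ha b hb hab
  simp only [coe_range, Set.mem_Iio] at ha hb
  have hlta : d * a < N := by rw [← hde]; exact (Nat.mul_lt_mul_left hd).mpr ha
  have hltb : d * b < N := by rw [← hde]; exact (Nat.mul_lt_mul_left hd).mpr hb
  have : (↑(d * a) : ZMod N).val = (↑(d * b) : ZMod N).val := congrArg ZMod.val hab
  rw [ZMod.val_cast_of_lt hlta, ZMod.val_cast_of_lt hltb] at this
  exact Nat.eq_of_mul_eq_mul_left hd this

lemma card_filter_dvd (d e : ℕ) (hd : 0 < d) (hde : d * e = N) :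
    (Finset.univ.filter (fun t : ZMod N => d ∣ t.val)).card = e := by
  rw [filter_dvd_eq_image d e hd hde, Finset.card_image_of_injOn (injOn_mul_cast d e hd hde),
    card_range]

lemma sum_psi_filter (d e : ℕ) (hd : 0 < d) (hde : d * e = N) (k : ZMod N) :
    ∑ t ∈ Finset.univ.filter (fun t : ZMod N => d ∣ t.val), psi N (t * k)
      = if e ∣ k.val then (e : ℂ) else 0 := by
  rw [filter_dvd_eq_image d e hd hde, Finset.sum_image (fun a ha b hb h =>
    injOn_mul_cast d e hd hde (by simpa using ha) (by simpa using hb) h)]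
  have hstep : ∀ m : ℕ, psi N (((d * m : ℕ) : ZMod N) * k) = psi N ((d : ZMod N) * k) ^ m := by
    intro m
    rw [show (((d * m : ℕ) : ZMod N)) * k = (m : ZMod N) * ((d : ZMod N) * k) by
      push_cast; ring, psi_natmul]
  have hcond : ((d : ZMod N) * k = 0) ↔ e ∣ k.val := by
    rw [show (d : ZMod N) * k = ((d * k.val : ℕ) : ZMod N) by
      rw [Nat.cast_mul, ZMod.natCast_zmod_val],
      ZMod.natCast_eq_zero_iff]
    constructor
    · intro h
      have h2 : d * e ∣ d * k.val := hde ▸ h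
      exact (Nat.mul_dvd_mul_iff_left hd).mp h2
    · intro h
      have h2 := (Nat.mul_dvd_mul_iff_left hd).mpr h
      rwa [hde] at h2
  simp only [hstep]
  by_cases h : e ∣ k.val
  · have hz1 : psi N ((d : ZMod N) * k) = 1 := by
      rw [hcond.mpr h]; exact psi_zero
    simp [hz1, h]
  · have hz1 : psi N ((d : ZMod N) * k) ≠ 1 := fun h1 =>
      h (hcond.mp (psi_eq_one_iff.mp h1))
    have hze : psi N ((d : ZMod N) * k) ^ e = 1 := by
      rw [← psi_natmul, show ((e : ZMod N)) * ((d : ZMod N) * k) = 0 by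
        rw [show ((e : ZMod N)) * ((d : ZMod N) * k) = ((e * d : ℕ) : ZMod N) * k by
          push_cast; ring, Nat.mul_comm, hde, ZMod.natCast_self, zero_mul]]
      exact psi_zero
    rw [geom_sum_eq hz1, hze, sub_self, zero_div, if_neg h]

lemma sum_psi_all (k : ZMod N) :
    ∑ t : ZMod N, psi N (t * k) = if k = 0 then (N : ℂ) else 0 := by
  have h := sum_psi_filter 1 N one_pos (one_mul N) k
  have h1 : Finset.univ.filter (fun t : ZMod N => 1 ∣ t.val) = Finset.univ := by
    simp
  rw [h1] at h
  rw [h]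
  congr 1
  simp only [eq_iff_iff]
  constructor
  · intro hd
    exact (ZMod.val_eq_zero k).mp (Nat.eq_zero_of_dvd_of_lt hd k.val_lt)
  · rintro rfl; simp

end ICGaux

namespace ICGaux2

lemma charpoly_conj {n : Type} [Fintype n] [DecidableEq n] {R : Type} [CommRing R]
    (F Fi M : Matrix n n R) (h : F * Fi = 1) :
    (F * M * Fi).charpoly = M.charpoly := by
  have hch : Matrix.charmatrix (F * M * Fi)
      = F.map C * Matrix.charmatrix M * Fi.map C := by
    rw [Matrix.charmatrix, Matrix.charmatrix]
    rw [mul_sub, sub_mul]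
    congr 1
    · have hcomm : Matrix.scalar n (X : R[X]) * Fi.map C
          = Fi.map C * Matrix.scalar n (X : R[X]) :=
        (Matrix.scalar_commute (X : R[X]) (fun r' => Commute.all _ _) (Fi.map C)).eq
      rw [mul_assoc, hcomm, ← mul_assoc, ← Matrix.map_mul, h, Matrix.map_one C C.map_zero
        C.map_one, one_mul]
    · simp only [RingHom.mapMatrix_apply]
      rw [← Matrix.map_mul, ← Matrix.map_mul]
  rw [Matrix.charpoly, Matrix.charpoly, hch, Matrix.det_mul, Matrix.det_mul]
  have h2 : F.map C * Fi.map C = 1 := by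
    rw [← Matrix.map_mul, h, Matrix.map_one C C.map_zero C.map_one]
  have h3 : (F.map C).det * (Fi.map C).det = 1 := by
    rw [← Matrix.det_mul, h2, Matrix.det_one]
  calc (F.map C).det * (Matrix.charmatrix M).det * (Fi.map C).det
      = (F.map C).det * (Fi.map C).det * (Matrix.charmatrix M).det := by ring
    _ = (Matrix.charmatrix M).det := by rw [h3, one_mul]

lemma charpoly_diagonal {n : Type} [Fintype n] [DecidableEq n] {R : Type} [CommRing R]
    (d : n → R) : (Matrix.diagonal d).charpoly = ∏ i, (X - C (d i)) := by
  have h : Matrix.charmatrix (Matrix.diagonal d)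
      = Matrix.diagonal (fun i => (X : R[X]) - C (d i)) := by
    ext i j
    by_cases hij : i = j
    · subst hij
      rw [Matrix.charmatrix_apply_eq, Matrix.diagonal_apply_eq, Matrix.diagonal_apply_eq]
    · rw [Matrix.charmatrix_apply_ne _ _ _ hij, Matrix.diagonal_apply_ne _ hij,
        Matrix.diagonal_apply_ne _ hij, map_zero, neg_zero]
  rw [Matrix.charpoly, h, Matrix.det_diagonal]

end ICGaux2

namespace ICGaux

variable {N : ℕ} [NeZero N]

lemma charpoly_circulant (g : ZMod N → ℝ) (L : ZMod N → ℝ)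
    (hL : ∀ k : ZMod N, ∑ t : ZMod N, (g t : ℂ) * psi N (t * k) = ((L k : ℝ) : ℂ)) :
    (Matrix.of fun i j : ZMod N => g (i - j)).charpoly
      = ∏ k : ZMod N, (X - C (L k)) := by
  have hNne : (N : ℂ) ≠ 0 := Nat.cast_ne_zero.mpr (NeZero.ne N)
  set F : Matrix (ZMod N) (ZMod N) ℂ := Matrix.of fun j k => psi N (-(j * k)) with hF
  set Fi : Matrix (ZMod N) (ZMod N) ℂ :=
    Matrix.of fun j k => (N : ℂ)⁻¹ * psi N (j * k) with hFi
  have hFFi : F * Fi = 1 := by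
    ext j k
    rw [Matrix.mul_apply]
    have hterm : ∀ t : ZMod N, F j t * Fi t k = (N : ℂ)⁻¹ * psi N (t * (k - j)) := by
      intro t
      show psi N (-(j * t)) * ((N : ℂ)⁻¹ * psi N (t * k)) = _
      rw [show t * (k - j) = t * k + -(j * t) by ring, psi_add]
      ring
    rw [Finset.sum_congr rfl fun t _ => hterm t, ← Finset.mul_sum, sum_psi_all (k - j)]
    by_cases hjk : j = k
    · subst hjk
      simp [Matrix.one_apply_eq, inv_mul_cancel₀ hNne, sub_self]
    · rw [if_neg (fun hh => hjk (sub_eq_zero.mp hh).symm), mul_zero,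
        Matrix.one_apply_ne hjk]
  set Mc : Matrix (ZMod N) (ZMod N) ℂ :=
    Matrix.of fun i j : ZMod N => ((g (i - j) : ℝ) : ℂ) with hMc
  set Dg : Matrix (ZMod N) (ZMod N) ℂ :=
    Matrix.diagonal (fun k : ZMod N => ((L k : ℝ) : ℂ)) with hDg
  have hMF : Mc * F = F * Dg := by
    ext j k
    rw [Matrix.mul_apply, hDg, Matrix.mul_diagonal]
    have h1 : ∀ t : ZMod N, Mc j t * F t k
        = ((g (j - t) : ℝ) : ℂ) * psi N (-(t * k)) := fun t => rfl
    rw [Finset.sum_congr rfl fun t _ => h1 t,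
      ← Equiv.sum_comp (Equiv.subLeft j)
        (fun t => ((g (j - t) : ℝ) : ℂ) * psi N (-(t * k)))]
    have h2 : ∀ s : ZMod N,
        ((g (j - Equiv.subLeft j s) : ℝ) : ℂ) * psi N (-(Equiv.subLeft j s * k))
          = psi N (-(j * k)) * (((g s : ℝ) : ℂ) * psi N (s * k)) := by
      intro s
      simp only [Equiv.subLeft_apply, sub_sub_cancel]
      rw [show -((j - s) * k) = -(j * k) + s * k by ring, psi_add]
      ring
    rw [Finset.sum_congr rfl fun s _ => h2 s, ← Finset.mul_sum, hL k]
    rfl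
  have hMceq : Mc = F * Dg * Fi := by
    calc Mc = Mc * (F * Fi) := by rw [hFFi, mul_one]
      _ = Mc * F * Fi := by rw [mul_assoc]
      _ = F * Dg * Fi := by rw [hMF]
  have hchMc : Mc.charpoly = ∏ k : ZMod N, (X - C ((L k : ℝ) : ℂ)) := by
    rw [hMceq, ICGaux2.charpoly_conj F Fi Dg hFFi, hDg, ICGaux2.charpoly_diagonal]
  have hmap : (Matrix.of fun i j : ZMod N => g (i - j)).map (algebraMap ℝ ℂ) = Mc := by
    ext i j
    simp [Matrix.map_apply, hMc, Algebra.algebraMap_self, Complex.coe_algebraMap]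
  have hinj : Function.Injective (algebraMap ℝ ℂ) := RingHom.injective _
  apply Polynomial.map_injective (algebraMap ℝ ℂ) hinj
  rw [← Matrix.charpoly_map _ (algebraMap ℝ ℂ), hmap, hchMc, Polynomial.map_prod]
  refine Finset.prod_congr rfl fun k _ => ?_
  rw [Polynomial.map_sub, Polynomial.map_X, Polynomial.map_C]
  rfl

lemma sum_abs_roots {M : Matrix (ZMod N) (ZMod N) ℝ} {L : ZMod N → ℝ}
    (h : M.charpoly = ∏ k : ZMod N, (X - C (L k))) :
    (M.charpoly.roots.map fun x => |x|).sum = ∑ k : ZMod N, |L k| := by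
  have hroots : M.charpoly.roots = Finset.univ.val.map L := by
    rw [h]
    have : (∏ k : ZMod N, (X - C (L k)))
        = ((Finset.univ.val.map L).map (fun a : ℝ => X - C a)).prod := by
      rw [Multiset.map_map]
      rfl
    rw [this, Polynomial.roots_multiset_prod_X_sub_C]
  rw [hroots, Multiset.map_map]
  rfl

end ICGaux
namespace ICGaux

variable {p : ℕ}

lemma gcd_val [NeZero (3 * p)] (a b : ZMod (3 * p)) :
    Int.gcd ((a.val : ℤ) - (b.val : ℤ)) ((3 * p : ℕ) : ℤ) = Nat.gcd (a - b).val (3 * p) := by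
  set x : ℤ := (a.val : ℤ) - (b.val : ℤ) with hx
  set v : ℕ := (a - b).val with hv
  have hdvd : ((3 * p : ℕ) : ℤ) ∣ x - (v : ℤ) := by
    rw [← ZMod.intCast_zmod_eq_zero_iff_dvd]
    push_cast [hx, hv]
    rw [ZMod.natCast_zmod_val, ZMod.natCast_zmod_val, ZMod.natCast_zmod_val]
    ring
  have key : Int.gcd x ((3 * p : ℕ) : ℤ) = Int.gcd (v : ℤ) ((3 * p : ℕ) : ℤ) := by
    apply Nat.dvd_antisymm
    · apply Int.natCast_dvd_natCast.mp
      push_cast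
      apply Int.dvd_coe_gcd _ (Int.gcd_dvd_right _ _)
      have h1 : (Int.gcd x (3 * p) : ℤ) ∣ x := Int.gcd_dvd_left _ _
      have h2 : (Int.gcd x (3 * p) : ℤ) ∣ x - v := dvd_trans (Int.gcd_dvd_right _ _) hdvd
      have := dvd_sub h1 h2
      simpa using this
    · apply Int.natCast_dvd_natCast.mp
      push_cast
      apply Int.dvd_coe_gcd _ (Int.gcd_dvd_right _ _)
      have h1 : (Int.gcd (v : ℤ) (3 * p) : ℤ) ∣ (v : ℤ) := Int.gcd_dvd_left _ _
      have h2 : (Int.gcd (v : ℤ) (3 * p) : ℤ) ∣ x - v := dvd_trans (Int.gcd_dvd_right _ _) hdvd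
      have := dvd_add h2 h1
      simpa using this
  rw [key, Int.gcd_natCast_natCast]

lemma val_eq_zero_of_dvd (hp : p.Prime) (hp3 : 3 < p) [NeZero (3 * p)] {t : ZMod (3 * p)}
    (h3 : 3 ∣ t.val) (hpd : p ∣ t.val) : t = 0 := by
  have hcop : Nat.Coprime 3 p := (Nat.coprime_primes Nat.prime_three hp).mpr (by omega)
  have : 3 * p ∣ t.val := hcop.mul_dvd_of_dvd_of_dvd h3 hpd
  exact (ZMod.val_eq_zero t).mp (Nat.eq_zero_of_dvd_of_lt this t.val_lt)

lemma gcd_eq_one_iff (hp : p.Prime) (hp3 : 3 < p) (v : ℕ) :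
    Nat.gcd v (3 * p) = 1 ↔ ¬ 3 ∣ v ∧ ¬ p ∣ v := by
  rw [show (Nat.gcd v (3 * p) = 1) ↔ Nat.Coprime v (3 * p) from Iff.rfl,
    Nat.coprime_mul_iff_right]
  constructor
  · rintro ⟨h1, h2⟩
    exact ⟨fun h => by
      have := Nat.Prime.coprime_iff_not_dvd Nat.prime_three |>.mp h1.symm
      exact this h, fun h => by
      have := Nat.Prime.coprime_iff_not_dvd hp |>.mp h2.symm
      exact this h⟩
  · rintro ⟨h1, h2⟩
    exact ⟨Nat.Coprime.symm ((Nat.Prime.coprime_iff_not_dvd Nat.prime_three).mpr h1),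
      Nat.Coprime.symm ((Nat.Prime.coprime_iff_not_dvd hp).mpr h2)⟩

lemma gcd_mem_one_p_iff (hp : p.Prime) (hp3 : 3 < p) (v : ℕ) :
    (Nat.gcd v (3 * p) = 1 ∨ Nat.gcd v (3 * p) = p) ↔ ¬ 3 ∣ v := by
  constructor
  · rintro (h | h) h3
    · have : (3 : ℕ) ∣ 1 := h ▸ Nat.dvd_gcd h3 (dvd_mul_right 3 p)
      omega
    · have : (3 : ℕ) ∣ p := h ▸ Nat.dvd_gcd h3 (dvd_mul_right 3 p)
      have := (Nat.prime_dvd_prime_iff_eq Nat.prime_three hp).mp this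
      omega
  · intro h3
    have hcop : Nat.Coprime v 3 :=
      Nat.Coprime.symm ((Nat.Prime.coprime_iff_not_dvd Nat.prime_three).mpr h3)
    have hdvd : Nat.gcd v (3 * p) ∣ p := by
      have h1 : Nat.gcd v (3 * p) ∣ 3 * p := Nat.gcd_dvd_right v (3 * p)
      have h2 : Nat.Coprime (Nat.gcd v (3 * p)) 3 :=
        Nat.Coprime.coprime_dvd_left (Nat.gcd_dvd_left v (3 * p)) hcop
      exact (Nat.Coprime.dvd_of_dvd_mul_left h2) h1
    exact (hp.eq_one_or_self_of_dvd _ hdvd)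

lemma adj1_iff (hp : p.Prime) (hp3 : 3 < p) [NeZero (3 * p)] (a b : ZMod (3 * p)) :
    (ICG (3 * p) {1}).Adj a b ↔ a ≠ b ∧ ¬ 3 ∣ (a - b).val ∧ ¬ p ∣ (a - b).val := by
  show (a ≠ b ∧ _) ↔ _
  rw [gcd_val a b, Finset.mem_singleton]
  rw [and_congr_right_iff]
  intro _
  exact gcd_eq_one_iff hp hp3 _

lemma adj2_iff (hp : p.Prime) (hp3 : 3 < p) [NeZero (3 * p)] (a b : ZMod (3 * p)) :
    (ICG (3 * p) {1, p}).Adj a b ↔ a ≠ b ∧ ¬ 3 ∣ (a - b).val := by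
  show (a ≠ b ∧ _) ↔ _
  rw [gcd_val a b, Finset.mem_insert, Finset.mem_singleton]
  rw [and_congr_right_iff]
  intro _
  exact gcd_mem_one_p_iff hp hp3 _

end ICGaux
namespace ICGaux

variable {p : ℕ}

lemma pi3_eq_zero_iff [NeZero (3 * p)] (t : ZMod (3 * p)) :
    ZMod.castHom (dvd_mul_right 3 p) (ZMod 3) t = 0 ↔ 3 ∣ t.val := by
  rw [ZMod.castHom_apply, ← ZMod.natCast_val, ZMod.natCast_eq_zero_iff]

lemma pip_eq_zero_iff [NeZero (3 * p)] (t : ZMod (3 * p)) :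
    ZMod.castHom (dvd_mul_left p 3) (ZMod p) t = 0 ↔ p ∣ t.val := by
  rw [ZMod.castHom_apply, ← ZMod.natCast_val, ZMod.natCast_eq_zero_iff]

lemma crt_surj (hp : p.Prime) (hp3 : 3 < p) [NeZero (3 * p)] :
    Function.Surjective (fun t : ZMod (3 * p) =>
      (ZMod.castHom (dvd_mul_right 3 p) (ZMod 3) t,
       ZMod.castHom (dvd_mul_left p 3) (ZMod p) t)) := by
  haveI : NeZero p := ⟨hp.pos.ne'⟩
  set f := fun t : ZMod (3 * p) =>
      (ZMod.castHom (dvd_mul_right 3 p) (ZMod 3) t,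
       ZMod.castHom (dvd_mul_left p 3) (ZMod p) t) with hf
  have hinj : Function.Injective f := by
    intro a b hab
    have h1 : ZMod.castHom (dvd_mul_right 3 p) (ZMod 3) (a - b) = 0 := by
      rw [map_sub, sub_eq_zero]
      exact congrArg Prod.fst hab
    have h2 : ZMod.castHom (dvd_mul_left p 3) (ZMod p) (a - b) = 0 := by
      rw [map_sub, sub_eq_zero]
      exact congrArg Prod.snd hab
    have := val_eq_zero_of_dvd hp hp3 ((pi3_eq_zero_iff _).mp h1) ((pip_eq_zero_iff _).mp h2)
    exact sub_eq_zero.mp this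
  have hcard : Fintype.card (ZMod (3 * p)) = Fintype.card (ZMod 3 × ZMod p) := by
    rw [ZMod.card, Fintype.card_prod, ZMod.card, ZMod.card]
  exact ((Fintype.bijective_iff_injective_and_card f).mpr ⟨hinj, hcard⟩).surjective

lemma exists_avoid {K : Type} [Fintype K] [DecidableEq K] (h : 2 < Fintype.card K) (a b : K) :
    ∃ x : K, x ≠ a ∧ x ≠ b := by
  have hcard : ({a, b} : Finset K).card < Fintype.card K := by
    calc ({a, b} : Finset K).card ≤ 2 := Finset.card_insert_le a {b} |>.trans (by simp)
      _ < Fintype.card K := h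
  have hne : (Finset.univ \ ({a, b} : Finset K)).Nonempty := by
    rw [← Finset.card_pos, Finset.card_sdiff_of_subset (Finset.subset_univ _), Finset.card_univ]
    omega
  obtain ⟨x, hx⟩ := hne
  simp only [Finset.mem_sdiff, Finset.mem_univ, Finset.mem_insert, Finset.mem_singleton,
    true_and, not_or] at hx
  exact ⟨x, hx.1, hx.2⟩

lemma exists_common (hp : p.Prime) (hp3 : 3 < p) [NeZero (3 * p)] (i j : ZMod (3 * p)) :
    ∃ c : ZMod (3 * p),
      (¬ 3 ∣ (i - c).val ∧ ¬ p ∣ (i - c).val) ∧ (¬ 3 ∣ (c - j).val ∧ ¬ p ∣ (c - j).val) := by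
  haveI : NeZero p := ⟨hp.pos.ne'⟩
  set π3 := ZMod.castHom (dvd_mul_right 3 p) (ZMod 3)
  set πp := ZMod.castHom (dvd_mul_left p 3) (ZMod p)
  obtain ⟨x, hx1, hx2⟩ := exists_avoid (by rw [ZMod.card]; omega : 2 < Fintype.card (ZMod 3))
    (π3 i) (π3 j)
  obtain ⟨y, hy1, hy2⟩ := exists_avoid (by rw [ZMod.card]; omega : 2 < Fintype.card (ZMod p))
    (πp i) (πp j)
  obtain ⟨c, hc⟩ := crt_surj hp hp3 (x, y)
  have hc1 : π3 c = x := congrArg Prod.fst hc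
  have hc2 : πp c = y := congrArg Prod.snd hc
  refine ⟨c, ⟨?_, ?_⟩, ?_, ?_⟩
  · intro h
    have := (pi3_eq_zero_iff (i - c)).mpr h
    rw [map_sub, sub_eq_zero, hc1] at this
    exact hx1 this.symm
  · intro h
    have := (pip_eq_zero_iff (i - c)).mpr h
    rw [map_sub, sub_eq_zero, hc2] at this
    exact hy1 this.symm
  · intro h
    have := (pi3_eq_zero_iff (c - j)).mpr h
    rw [map_sub, sub_eq_zero, hc1] at this
    exact hx2 this
  · intro h
    have := (pip_eq_zero_iff (c - j)).mpr h
    rw [map_sub, sub_eq_zero, hc2] at this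
    exact hy2 this

end ICGaux
namespace ICGaux

variable {p : ℕ}

noncomputable def g1 (p : ℕ) (t : ZMod (3 * p)) : ℝ :=
  1 + (if 3 ∣ t.val then 1 else 0) + (if p ∣ t.val then 1 else 0)
    - 3 * (if t = 0 then 1 else 0)

noncomputable def g2 (p : ℕ) (t : ZMod (3 * p)) : ℝ :=
  1 + (if 3 ∣ t.val then 1 else 0) - 2 * (if t = 0 then 1 else 0)

noncomputable def l1 (p : ℕ) (k : ZMod (3 * p)) : ℝ :=
  (if k = 0 then 3 * (p : ℝ) else 0) + (if p ∣ k.val then (p : ℝ) else 0)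
    + (if 3 ∣ k.val then 3 else 0) - 3

noncomputable def l2 (p : ℕ) (k : ZMod (3 * p)) : ℝ :=
  (if k = 0 then 3 * (p : ℝ) else 0) + (if p ∣ k.val then (p : ℝ) else 0) - 2

lemma dist_two_aux {V : Type} [Fintype V] {G : SimpleGraph V} {u v : V}
    (hne : u ≠ v) (hnadj : ¬ G.Adj u v) {c : V} (h1 : G.Adj u c) (h2 : G.Adj c v) :
    G.dist u v = 2 := by
  have hw : (SimpleGraph.Walk.cons h1 h2.toWalk).length = 2 := by
    simp
  have hle : G.dist u v ≤ 2 := hw ▸ SimpleGraph.dist_le _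
  have h0 : G.dist u v ≠ 0 := fun h =>
    hne ((SimpleGraph.Reachable.dist_eq_zero_iff ⟨SimpleGraph.Walk.cons h1 h2.toWalk⟩).mp h)
  have h1' : G.dist u v ≠ 1 := fun h => hnadj (SimpleGraph.dist_eq_one_iff_adj.mp h)
  omega

lemma distMatrix1_eq (hp : p.Prime) (hp3 : 3 < p) [NeZero (3 * p)] :
    distMatrix (ICG (3 * p) {1}) = Matrix.of fun i j : ZMod (3 * p) => g1 p (i - j) := by
  ext i j
  show ((ICG (3 * p) {1}).dist i j : ℝ) = g1 p (i - j)
  by_cases hij : i = j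
  · subst hij
    rw [SimpleGraph.dist_self]
    simp [g1, ZMod.val_zero]
    norm_num
  · have hsub : i - j ≠ 0 := sub_ne_zero.mpr hij
    by_cases hadj : (ICG (3 * p) {1}).Adj i j
    · rw [SimpleGraph.dist_eq_one_iff_adj.mpr hadj]
      obtain ⟨-, h3, hpd⟩ := (adj1_iff hp hp3 i j).mp hadj
      simp [g1, h3, hpd, hsub]
    · have hdiv : 3 ∣ (i - j).val ∨ p ∣ (i - j).val := by
        by_contra hcon
        push_neg at hcon
        exact hadj ((adj1_iff hp hp3 i j).mpr ⟨hij, hcon.1, hcon.2⟩)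
      obtain ⟨c, hc1, hc2⟩ := exists_common hp hp3 i j
      have hadj1 : (ICG (3 * p) {1}).Adj i c := (adj1_iff hp hp3 i c).mpr
        ⟨fun h => hc1.1 (by rw [h, sub_self, ZMod.val_zero]; exact Nat.dvd_zero 3), hc1⟩
      have hadj2 : (ICG (3 * p) {1}).Adj c j := (adj1_iff hp hp3 c j).mpr
        ⟨fun h => hc2.1 (by rw [h, sub_self, ZMod.val_zero]; exact Nat.dvd_zero 3), hc2⟩
      rw [dist_two_aux hij hadj hadj1 hadj2]
      have hnboth : ¬ (3 ∣ (i - j).val ∧ p ∣ (i - j).val) := fun ⟨h3, hpd⟩ =>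
        hsub (val_eq_zero_of_dvd hp hp3 h3 hpd)
      rcases hdiv with h | h
      · have hnp : ¬ p ∣ (i - j).val := fun hh => hnboth ⟨h, hh⟩
        simp [g1, h, hnp, hsub]
        norm_num
      · have hn3 : ¬ 3 ∣ (i - j).val := fun hh => hnboth ⟨hh, h⟩
        simp [g1, h, hn3, hsub]
        norm_num

lemma distMatrix2_eq (hp : p.Prime) (hp3 : 3 < p) [NeZero (3 * p)] :
    distMatrix (ICG (3 * p) {1, p}) = Matrix.of fun i j : ZMod (3 * p) => g2 p (i - j) := by
  ext i j
  show ((ICG (3 * p) {1, p}).dist i j : ℝ) = g2 p (i - j)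
  by_cases hij : i = j
  · subst hij
    rw [SimpleGraph.dist_self]
    simp [g2, ZMod.val_zero]
    norm_num
  · have hsub : i - j ≠ 0 := sub_ne_zero.mpr hij
    by_cases hadj : (ICG (3 * p) {1, p}).Adj i j
    · rw [SimpleGraph.dist_eq_one_iff_adj.mpr hadj]
      obtain ⟨-, h3⟩ := (adj2_iff hp hp3 i j).mp hadj
      simp [g2, h3, hsub]
    · have hdiv : 3 ∣ (i - j).val := by
        by_contra hcon
        exact hadj ((adj2_iff hp hp3 i j).mpr ⟨hij, hcon⟩)
      obtain ⟨c, hc1, hc2⟩ := exists_common hp hp3 i j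
      have hadj1 : (ICG (3 * p) {1, p}).Adj i c := (adj2_iff hp hp3 i c).mpr
        ⟨fun h => hc1.1 (by rw [h, sub_self, ZMod.val_zero]; exact Nat.dvd_zero 3), hc1.1⟩
      have hadj2 : (ICG (3 * p) {1, p}).Adj c j := (adj2_iff hp hp3 c j).mpr
        ⟨fun h => hc2.1 (by rw [h, sub_self, ZMod.val_zero]; exact Nat.dvd_zero 3), hc2.1⟩
      rw [dist_two_aux hij hadj hadj1 hadj2]
      simp [g2, hdiv, hsub]
      norm_num

end ICGaux
namespace ICGaux

variable {p : ℕ}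

lemma sum_ite_zero_psi [NeZero (3 * p)] (k : ZMod (3 * p)) :
    ∑ t : ZMod (3 * p), (if t = 0 then psi (3 * p) (t * k) else 0) = 1 := by
  rw [Finset.sum_ite_eq' Finset.univ (0 : ZMod (3 * p)) (fun t => psi (3 * p) (t * k))]
  simp [psi_zero]

lemma fourier1 (hp : p.Prime) [NeZero (3 * p)] (k : ZMod (3 * p)) :
    ∑ t : ZMod (3 * p), (g1 p t : ℂ) * psi (3 * p) (t * k) = ((l1 p k : ℝ) : ℂ) := by
  have e0 := sum_psi_all (N := 3 * p) k
  have e3 := sum_psi_filter (N := 3 * p) 3 p (by norm_num) rfl k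
  have ep := sum_psi_filter (N := 3 * p) p 3 hp.pos (Nat.mul_comm p 3) k
  have hsplit : ∀ t : ZMod (3 * p), (g1 p t : ℂ) * psi (3 * p) (t * k)
      = psi (3 * p) (t * k) + (if 3 ∣ t.val then psi (3 * p) (t * k) else 0)
        + (if p ∣ t.val then psi (3 * p) (t * k) else 0)
        - 3 * (if t = 0 then psi (3 * p) (t * k) else 0) := by
    intro t
    simp only [g1]
    push_cast
    split_ifs <;> push_cast <;> ring
  rw [Finset.sum_congr rfl fun t _ => hsplit t]
  rw [Finset.sum_sub_distrib, Finset.sum_add_distrib, Finset.sum_add_distrib, ← Finset.mul_sum,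
    ← Finset.sum_filter, ← Finset.sum_filter, e0, e3, ep, sum_ite_zero_psi k]
  simp only [l1]
  push_cast [apply_ite (Complex.ofReal)]
  split_ifs <;> push_cast <;> ring

lemma fourier2 (hp : p.Prime) [NeZero (3 * p)] (k : ZMod (3 * p)) :
    ∑ t : ZMod (3 * p), (g2 p t : ℂ) * psi (3 * p) (t * k) = ((l2 p k : ℝ) : ℂ) := by
  have e0 := sum_psi_all (N := 3 * p) k
  have e3 := sum_psi_filter (N := 3 * p) 3 p (by norm_num) rfl k
  have hsplit : ∀ t : ZMod (3 * p), (g2 p t : ℂ) * psi (3 * p) (t * k)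
      = psi (3 * p) (t * k) + (if 3 ∣ t.val then psi (3 * p) (t * k) else 0)
        - 2 * (if t = 0 then psi (3 * p) (t * k) else 0) := by
    intro t
    simp only [g2]
    push_cast
    split_ifs <;> push_cast <;> ring
  rw [Finset.sum_congr rfl fun t _ => hsplit t]
  rw [Finset.sum_sub_distrib, Finset.sum_add_distrib, ← Finset.mul_sum,
    ← Finset.sum_filter, e0, e3, sum_ite_zero_psi k]
  simp only [l2]
  push_cast [apply_ite (Complex.ofReal)]
  split_ifs <;> push_cast <;> ring

end ICGaux
namespace ICGaux

variable {p : ℕ}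

lemma card_filter_eq_zero [NeZero (3 * p)] :
    (Finset.univ.filter (fun k : ZMod (3 * p) => k = 0)).card = 1 := by
  rw [Finset.filter_eq' Finset.univ (0 : ZMod (3 * p)), if_pos (Finset.mem_univ _)]
  simp

lemma sum_abs_l1 (hp : p.Prime) (hp3 : 3 < p) [NeZero (3 * p)] :
    ∑ k : ZMod (3 * p), |l1 p k| = 12 * ((p : ℝ) - 1) := by
  have hple : (3 : ℝ) < (p : ℝ) := by exact_mod_cast hp3
  have hpt : ∀ k : ZMod (3 * p), |l1 p k|
      = 3 + (-3) * (if 3 ∣ k.val then (1 : ℝ) else 0)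
        + ((p : ℝ) - 6) * (if p ∣ k.val then (1 : ℝ) else 0)
        + (3 * (p : ℝ) + 6) * (if k = 0 then (1 : ℝ) else 0) := by
    intro k
    by_cases h1 : k = 0
    · have ha : 3 ∣ k.val := by rw [h1, ZMod.val_zero]; exact Nat.dvd_zero _
      have hb : p ∣ k.val := by rw [h1, ZMod.val_zero]; exact Nat.dvd_zero _
      simp only [l1, if_pos h1, if_pos ha, if_pos hb]
      rw [abs_of_nonneg (by nlinarith)]
      ring
    · by_cases h2 : 3 ∣ k.val <;> by_cases h3 : p ∣ k.val
      · exact absurd (val_eq_zero_of_dvd hp hp3 h2 h3) h1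
      · simp only [l1, if_neg h1, if_pos h2, if_neg h3]
        norm_num
      · simp only [l1, if_neg h1, if_neg h2, if_pos h3]
        rw [show (0 : ℝ) + (p : ℝ) + 0 - 3 = (p : ℝ) - 3 by ring,
          abs_of_nonneg (by linarith)]
        ring
      · simp only [l1, if_neg h1, if_neg h2, if_neg h3]
        rw [show (0 : ℝ) + 0 + 0 - 3 = -3 by ring]
        norm_num
  rw [Finset.sum_congr rfl fun k _ => hpt k]
  rw [Finset.sum_add_distrib, Finset.sum_add_distrib, Finset.sum_add_distrib,
    Finset.sum_const, ← Finset.mul_sum, ← Finset.mul_sum, ← Finset.mul_sum,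
    Finset.sum_boole, Finset.sum_boole, Finset.sum_boole,
    card_filter_dvd 3 p (by norm_num) rfl,
    card_filter_dvd p 3 hp.pos (Nat.mul_comm p 3), card_filter_eq_zero,
    Finset.card_univ, ZMod.card]
  push_cast
  ring

lemma sum_abs_l2 (hp : p.Prime) (hp3 : 3 < p) [NeZero (3 * p)] :
    ∑ k : ZMod (3 * p), |l2 p k| = 12 * ((p : ℝ) - 1) := by
  have hple : (3 : ℝ) < (p : ℝ) := by exact_mod_cast hp3
  have hpt : ∀ k : ZMod (3 * p), |l2 p k|
      = 2 + ((p : ℝ) - 4) * (if p ∣ k.val then (1 : ℝ) else 0)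
        + (3 * (p : ℝ)) * (if k = 0 then (1 : ℝ) else 0) := by
    intro k
    by_cases h1 : k = 0
    · have hb : p ∣ k.val := by rw [h1, ZMod.val_zero]; exact Nat.dvd_zero _
      simp only [l2, if_pos h1, if_pos hb]
      rw [abs_of_nonneg (by nlinarith)]
      ring
    · by_cases h3 : p ∣ k.val
      · simp only [l2, if_neg h1, if_pos h3]
        rw [show (0 : ℝ) + (p : ℝ) - 2 = (p : ℝ) - 2 by ring,
          abs_of_nonneg (by linarith)]
        ring
      · simp only [l2, if_neg h1, if_neg h3]
        rw [show (0 : ℝ) + 0 - 2 = -2 by ring]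
        norm_num
  rw [Finset.sum_congr rfl fun k _ => hpt k]
  rw [Finset.sum_add_distrib, Finset.sum_add_distrib,
    Finset.sum_const, ← Finset.mul_sum, ← Finset.mul_sum,
    Finset.sum_boole, Finset.sum_boole,
    card_filter_dvd p 3 hp.pos (Nat.mul_comm p 3), card_filter_eq_zero,
    Finset.card_univ, ZMod.card]
  push_cast
  ring

end ICGaux

/-- for a prime `p > 3` and `n = 3p`, the graphs `ICG_n({1})` and
`ICG_n({1, p})` have equal distance energy `12(p-1)`, distinct distance spectra, and
`ICG_n({1})` is a subgraph of `ICG_n({1, p})`. -/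
theorem distEquienergetic_ICG_3p (p : ℕ) (hp : p.Prime) (hp3 : 3 < p) (n : ℕ) [NeZero n]
    (hn : n = 3 * p) :
    distEnergy (ICG n {1}) = 12 * ((p : ℝ) - 1) ∧
    distEnergy (ICG n {1, p}) = 12 * ((p : ℝ) - 1) ∧
    (distMatrix (ICG n {1})).charpoly ≠ (distMatrix (ICG n {1, p})).charpoly ∧
    ICG n {1} ≤ ICG n {1, p} := by
  subst hn
  have hch1 : (distMatrix (ICG (3 * p) {1})).charpoly
      = ∏ k : ZMod (3 * p), (Polynomial.X - Polynomial.C (ICGaux.l1 p k)) := by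
    rw [ICGaux.distMatrix1_eq hp hp3]
    exact ICGaux.charpoly_circulant (ICGaux.g1 p) (ICGaux.l1 p) (ICGaux.fourier1 hp)
  have hch2 : (distMatrix (ICG (3 * p) {1, p})).charpoly
      = ∏ k : ZMod (3 * p), (Polynomial.X - Polynomial.C (ICGaux.l2 p k)) := by
    rw [ICGaux.distMatrix2_eq hp hp3]
    exact ICGaux.charpoly_circulant (ICGaux.g2 p) (ICGaux.l2 p) (ICGaux.fourier2 hp)
  have hppos : (0 : ℝ) < (p : ℝ) := by
    have := hp.pos; exact_mod_cast this
  refine ⟨?_, ?_, ?_, ?_⟩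
  · exact (ICGaux.sum_abs_roots hch1).trans (ICGaux.sum_abs_l1 hp hp3)
  · exact (ICGaux.sum_abs_roots hch2).trans (ICGaux.sum_abs_l2 hp hp3)
  · intro h
    have he1 : ((distMatrix (ICG (3 * p) {1})).charpoly).eval (4 * (p : ℝ)) = 0 := by
      rw [hch1, Polynomial.eval_prod]
      apply Finset.prod_eq_zero (Finset.mem_univ (0 : ZMod (3 * p)))
      rw [Polynomial.eval_sub, Polynomial.eval_X, Polynomial.eval_C]
      have : ICGaux.l1 p 0 = 4 * (p : ℝ) := by
        simp only [ICGaux.l1, ZMod.val_zero, if_pos rfl]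
        rw [if_pos (Nat.dvd_zero p), if_pos (Nat.dvd_zero 3)]
        norm_num
        ring
      rw [this, sub_self]
    have he2 : ((distMatrix (ICG (3 * p) {1, p})).charpoly).eval (4 * (p : ℝ)) ≠ 0 := by
      rw [hch2, Polynomial.eval_prod]
      rw [Finset.prod_ne_zero_iff]
      intro k _
      rw [Polynomial.eval_sub, Polynomial.eval_X, Polynomial.eval_C]
      have hlt : ICGaux.l2 p k < 4 * (p : ℝ) := by
        simp only [ICGaux.l2]
        split_ifs <;> nlinarith
      exact sub_ne_zero.mpr (ne_of_gt hlt)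
    rw [h] at he1
    exact he2 he1
  · intro a b hab
    exact ⟨hab.1, Finset.mem_insert.mpr (Or.inl (Finset.mem_singleton.mp hab.2))⟩
end
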